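/- arXiv:2410.14962 — 5 statements merged into one kernel-verified Lean document; each statement's English description precedes it below -/
import Mathlib

section
/- Let C be a pointed closed convex cone in ℝⁿ with nonempty interior and let E be a C-pseudo-cone. Then E is a C-asymptotic set if and only if h_E(v) = 0 for all v ∈ S^{n−1} ∩ ∂C°, where h_E(v) = sup_{x ∈ E} ⟨x, v⟩. -/
open Set MeasureTheory Metric Bornology
open scoped InnerProductSpace ENNReal NNReal Pointwise

noncomputable section

/-- A pointed closed convex cone with nonempty interior in `ℝⁿ`. -/
def IsPointedClosedConvexCone {n : ℕ} (C : Set (EuclideanSpace ℝ (Fin n))) : Prop :=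
  IsClosed C ∧ Convex ℝ C ∧ (interior C).Nonempty ∧
    (∀ l : ℝ, 0 ≤ l → ∀ x ∈ C, l • x ∈ C) ∧ C ∩ (-C) = {0}

/-- The recession cone of a set. -/
def recCone {n : ℕ} (E : Set (EuclideanSpace ℝ (Fin n))) : Set (EuclideanSpace ℝ (Fin n)) :=
  {x | ∀ y ∈ E, y + x ∈ E}

/-- A pseudo-cone: a nonempty closed convex set not containing the origin, closed under
dilations by factors `≥ 1`. -/
def IsPseudoCone {n : ℕ} (E : Set (EuclideanSpace ℝ (Fin n))) : Prop :=
  E.Nonempty ∧ IsClosed E ∧ Convex ℝ E ∧ (0 : EuclideanSpace ℝ (Fin n)) ∉ E ∧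
    ∀ l : ℝ, 1 ≤ l → ∀ x ∈ E, l • x ∈ E

/-- A `C`-pseudo-cone: a pseudo-cone contained in `C` with recession cone `C`. -/
def IsCPseudoCone {n : ℕ} (C E : Set (EuclideanSpace ℝ (Fin n))) : Prop :=
  IsPseudoCone E ∧ E ⊆ C ∧ recCone E = C

/-- The polar cone of `C`. -/
def polarCone {n : ℕ} (C : Set (EuclideanSpace ℝ (Fin n))) : Set (EuclideanSpace ℝ (Fin n)) :=
  {y | ∀ x ∈ C, ⟪x, y⟫_ℝ ≤ 0}

/-- The support function of a set. -/
def suppFn {n : ℕ} (E : Set (EuclideanSpace ℝ (Fin n))) (v : EuclideanSpace ℝ (Fin n)) : ℝ :=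
  sSup ((fun x => ⟪x, v⟫_ℝ) '' E)

/-- A `C`-asymptotic set: an unbounded closed convex subset of `C` avoiding the origin whose
boundary is asymptotic to the boundary of `C` at infinity. -/
def IsCAsymptotic {n : ℕ} (C A : Set (EuclideanSpace ℝ (Fin n))) : Prop :=
  A ⊆ C ∧ (0 : EuclideanSpace ℝ (Fin n)) ∉ A ∧ IsClosed A ∧ Convex ℝ A ∧
    ¬ IsBounded A ∧
    ∀ ε > 0, ∃ R > 0, ∀ x ∈ frontier A, R ≤ ‖x‖ → infDist x (frontier C) < ε

/-- The radial function of a set. -/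
def radialFn {n : ℕ} (E : Set (EuclideanSpace ℝ (Fin n))) (u : EuclideanSpace ℝ (Fin n)) : ℝ :=
  sInf {r : ℝ | 0 < r ∧ r • u ∈ E}

open Filter

namespace Stmt4Aux

variable {n : ℕ}

lemma inv_anti {a b : ℝ} (ha : 0 < a) (hab : a ≤ b) : b⁻¹ ≤ a⁻¹ :=
  inv_anti₀ ha hab

lemma norm_inv_smul {x : EuclideanSpace ℝ (Fin n)} (hx : x ≠ 0) : ‖‖x‖⁻¹ • x‖ = 1 := by
  have hxn : 0 < ‖x‖ := norm_pos_iff.2 hx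
  rw [norm_smul, Real.norm_eq_abs, abs_of_pos (inv_pos.2 hxn), inv_mul_cancel₀ hxn.ne']

lemma isClosed_polarCone (C : Set (EuclideanSpace ℝ (Fin n))) : IsClosed (polarCone C) := by
  have h : polarCone C = ⋂ x ∈ C, {y : EuclideanSpace ℝ (Fin n) | ⟪x, y⟫_ℝ ≤ 0} := by
    ext y; simp [polarCone]
  rw [h]
  exact isClosed_biInter fun x _ =>
    isClosed_le (Continuous.inner continuous_const continuous_id) continuous_const

lemma cone_add {C : Set (EuclideanSpace ℝ (Fin n))} (hC : IsPointedClosedConvexCone C)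
    {x y : EuclideanSpace ℝ (Fin n)} (hx : x ∈ C) (hy : y ∈ C) : x + y ∈ C := by
  have h := hC.2.1 hx hy (by norm_num : (0:ℝ) ≤ 1/2) (by norm_num : (0:ℝ) ≤ 1/2)
    (by norm_num : (1:ℝ)/2 + 1/2 = 1)
  have h2 := hC.2.2.2.1 2 (by norm_num) _ h
  have h3 : (2:ℝ) • (((1:ℝ)/2) • x + ((1:ℝ)/2) • y) = x + y := by
    rw [smul_add, smul_smul, smul_smul]; norm_num
  rwa [h3] at h2

/-- A nonzero element of the cone. -/
lemma cone_exists_ne_zero (hn : 1 ≤ n) {C : Set (EuclideanSpace ℝ (Fin n))}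
    (hC : IsPointedClosedConvexCone C) : ∃ w ∈ C, w ≠ 0 := by
  obtain ⟨w, hw⟩ := hC.2.2.1
  by_cases hw0 : w = 0
  · exfalso
    rw [hw0] at hw
    obtain ⟨r, hr, hball⟩ := Metric.mem_nhds_iff.1 (mem_interior_iff_mem_nhds.1 hw)
    set x1 := EuclideanSpace.single (⟨0, by omega⟩ : Fin n) (r/2) with hx1
    have hx1n : ‖x1‖ = r/2 := by
      rw [hx1, EuclideanSpace.norm_single, Real.norm_eq_abs, abs_of_pos (by linarith)]
    have hx1C : x1 ∈ C := hball (by rw [mem_ball, dist_zero_right, hx1n]; linarith)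
    have hx1C' : x1 ∈ -C := by
      rw [Set.mem_neg]
      apply hball
      rw [mem_ball, dist_zero_right, norm_neg, hx1n]; linarith
    have : x1 ∈ C ∩ (-C) := ⟨hx1C, hx1C'⟩
    rw [hC.2.2.2.2] at this
    have hx10 : x1 = 0 := this
    rw [hx10] at hx1n
    simp at hx1n; linarith
  · exact ⟨w, interior_subset hw, hw0⟩

lemma frontierC_nonempty (hn : 1 ≤ n) {C : Set (EuclideanSpace ℝ (Fin n))}
    (hC : IsPointedClosedConvexCone C) : (frontier C).Nonempty := by
  rw [nonempty_frontier_iff]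
  constructor
  · obtain ⟨w, hw⟩ := hC.2.2.1
    refine ⟨0, ?_⟩
    have := hC.2.2.2.1 0 le_rfl w (interior_subset hw)
    simpa using this
  · intro huniv
    set x1 := EuclideanSpace.single (⟨0, by omega⟩ : Fin n) (1:ℝ) with hx1
    have h1 : x1 ∈ C ∩ (-C) := by
      constructor
      · rw [huniv]; trivial
      · rw [Set.mem_neg, huniv]; trivial
    rw [hC.2.2.2.2] at h1
    have hx10 : x1 = 0 := h1
    have hn1 : ‖x1‖ = 1 := by
      rw [hx1, EuclideanSpace.norm_single, Real.norm_eq_abs, abs_of_pos one_pos]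
    rw [hx10] at hn1
    simp at hn1

/-- On the boundary of the polar cone, there is a unit vector of `C` orthogonal to `v`. -/
lemma exists_unit_orth (hn : 1 ≤ n) {C : Set (EuclideanSpace ℝ (Fin n))}
    (hC : IsPointedClosedConvexCone C) {v : EuclideanSpace ℝ (Fin n)}
    (hvfr : v ∈ frontier (polarCone C)) :
    ∃ u ∈ C, ‖u‖ = 1 ∧ ⟪u, v⟫_ℝ = 0 := by
  have hvpol : v ∈ polarCone C := (isClosed_polarCone C).frontier_subset hvfr
  by_contra hcon
  push_neg at hcon
  set K := C ∩ sphere (0 : EuclideanSpace ℝ (Fin n)) 1 with hK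
  have hKc : IsCompact K := (isCompact_sphere 0 1).inter_left hC.1
  have hKne : K.Nonempty := by
    obtain ⟨w, hwC, hw0⟩ := cone_exists_ne_zero hn hC
    refine ⟨‖w‖⁻¹ • w, hC.2.2.2.1 _ (inv_nonneg.2 (norm_nonneg _)) w hwC, ?_⟩
    rw [mem_sphere_zero_iff_norm]
    exact norm_inv_smul hw0
  obtain ⟨umax, humax, hmax⟩ := hKc.exists_isMaxOn (f := fun u => ⟪u, v⟫_ℝ) hKne
    ((Continuous.inner continuous_id continuous_const).continuousOn)
  have humaxn : ‖umax‖ = 1 := mem_sphere_zero_iff_norm.1 humax.2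
  have hm : ⟪umax, v⟫_ℝ < 0 := by
    refine lt_of_le_of_ne (hvpol umax humax.1) (hcon umax humax.1 humaxn)
  set m := ⟪umax, v⟫_ℝ with hmdef
  have hball : ball v (-m) ⊆ polarCone C := by
    intro y hy x hx
    rcases eq_or_ne x 0 with rfl | hx0
    · simp
    · have hxn : 0 < ‖x‖ := norm_pos_iff.2 hx0
      have hu : ‖x‖⁻¹ • x ∈ K := by
        refine ⟨hC.2.2.2.1 _ (inv_nonneg.2 hxn.le) x hx, ?_⟩
        rw [mem_sphere_zero_iff_norm]
        exact norm_inv_smul hx0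
      have h1 : ⟪‖x‖⁻¹ • x, v⟫_ℝ ≤ m := hmax hu
      have h2 : ⟪‖x‖⁻¹ • x, y - v⟫_ℝ ≤ ‖y - v‖ := by
        have := real_inner_le_norm (‖x‖⁻¹ • x) (y - v)
        rwa [norm_inv_smul hx0, one_mul] at this
      have h3 : ⟪‖x‖⁻¹ • x, y⟫_ℝ ≤ m + ‖y - v‖ := by
        have hsplit : ⟪‖x‖⁻¹ • x, y⟫_ℝ = ⟪‖x‖⁻¹ • x, v⟫_ℝ + ⟪‖x‖⁻¹ • x, y - v⟫_ℝ := by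
          rw [inner_sub_right]; ring
        rw [hsplit]; linarith
      have hd : ‖y - v‖ < -m := by rwa [mem_ball, dist_eq_norm] at hy
      have h4 : ⟪‖x‖⁻¹ • x, y⟫_ℝ ≤ 0 := by linarith
      have h5 : ⟪x, y⟫_ℝ = ‖x‖ * ⟪‖x‖⁻¹ • x, y⟫_ℝ := by
        rw [← real_inner_smul_left, smul_inv_smul₀ hxn.ne']
      rw [h5]
      exact mul_nonpos_iff.2 (Or.inl ⟨hxn.le, h4⟩)
  have hint : v ∈ interior (polarCone C) :=
    mem_interior.2 ⟨ball v (-m), hball, isOpen_ball, mem_ball_self (by linarith)⟩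
  rw [(isClosed_polarCone C).frontier_eq] at hvfr
  exact hvfr.2 hint

lemma suppFn_nonpos {C E : Set (EuclideanSpace ℝ (Fin n))} (hEne : E.Nonempty) (hEC : E ⊆ C)
    {v : EuclideanSpace ℝ (Fin n)} (hv : v ∈ polarCone C) : suppFn E v ≤ 0 :=
  csSup_le (hEne.image _) (by rintro _ ⟨x, hx, rfl⟩; exact hv x (hEC hx))

lemma le_suppFn {C E : Set (EuclideanSpace ℝ (Fin n))} (hEC : E ⊆ C)
    {v : EuclideanSpace ℝ (Fin n)} (hv : v ∈ polarCone C)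
    {x : EuclideanSpace ℝ (Fin n)} (hx : x ∈ E) : ⟪x, v⟫_ℝ ≤ suppFn E v :=
  le_csSup ⟨0, by rintro _ ⟨y, hy, rfl⟩; exact hv y (hEC hy)⟩ (mem_image_of_mem _ hx)


/-- A segment from a point of a closed set to a point outside it crosses the frontier. -/
lemma exists_frontier_dist_le {C : Set (EuclideanSpace ℝ (Fin n))} (hCcl : IsClosed C)
    {x p : EuclideanSpace ℝ (Fin n)} (hx : x ∈ C) (hp : p ∉ C) :
    ∃ z ∈ frontier C, dist x z ≤ dist x p := by
  set g := fun s : ℝ => x + s • (p - x) with hgdef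
  have hgcont : Continuous g := continuous_const.add (continuous_id.smul continuous_const)
  set S := {s : ℝ | s ∈ Icc (0:ℝ) 1 ∧ g s ∈ C} with hSdef
  have hg0 : g 0 = x := by simp [hgdef]
  have hg1 : g 1 = p := by simp [hgdef]
  have hS0 : (0:ℝ) ∈ S := by
    refine ⟨⟨le_refl 0, zero_le_one⟩, ?_⟩
    rw [hg0]; exact hx
  have hSne : S.Nonempty := ⟨0, hS0⟩
  have hSbdd : BddAbove S := ⟨1, fun s hs => hs.1.2⟩
  have hScl : IsClosed S := by
    have h : S = Icc (0:ℝ) 1 ∩ g ⁻¹' C := rfl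
    rw [h]
    exact isClosed_Icc.inter (hCcl.preimage hgcont)
  set s1 := sSup S with hs1def
  have hs1S : s1 ∈ S := hScl.csSup_mem hSne hSbdd
  have hs1lt : s1 < 1 := by
    rcases lt_or_eq_of_le hs1S.1.2 with h | h
    · exact h
    · exfalso
      have h2 := hs1S.2
      rw [h, hg1] at h2
      exact hp h2
  have htendaux : Tendsto (fun m : ℕ => ((m : ℝ) + 2)⁻¹) atTop (nhds 0) :=
    tendsto_inv_atTop_zero.comp (tendsto_atTop_add_const_right _ 2 tendsto_natCast_atTop_atTop)
  have hznint : g s1 ∈ closure Cᶜ := by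
    have hsm : Tendsto (fun m : ℕ => s1 + (1 - s1) * ((m : ℝ) + 2)⁻¹) atTop (nhds s1) := by
      have h1 : Tendsto (fun m : ℕ => (1 - s1) * ((m : ℝ) + 2)⁻¹) atTop
          (nhds ((1 - s1) * 0)) := htendaux.const_mul (1 - s1)
      simpa using tendsto_const_nhds.add h1
    have hpt : Tendsto (fun m : ℕ => g (s1 + (1 - s1) * ((m : ℝ) + 2)⁻¹)) atTop
        (nhds (g s1)) := (hgcont.tendsto s1).comp hsm
    refine mem_closure_of_tendsto hpt (Filter.Eventually.of_forall fun m => ?_)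
    intro hmem
    have hinvpos : (0:ℝ) < ((m : ℝ) + 2)⁻¹ := by positivity
    have hinvle : ((m : ℝ) + 2)⁻¹ ≤ 1 := by
      apply inv_le_one_of_one_le₀
      have h0 : (0:ℝ) ≤ (m : ℝ) := Nat.cast_nonneg m
      linarith
    have h1s1 : 0 < 1 - s1 := by linarith
    have hsmem : s1 + (1 - s1) * ((m : ℝ) + 2)⁻¹ ∈ S := by
      refine ⟨⟨?_, ?_⟩, hmem⟩
      · have h0 := hs1S.1.1
        nlinarith
      · nlinarith
    have h2 := le_csSup hSbdd hsmem
    rw [← hs1def] at h2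
    nlinarith
  refine ⟨g s1, ?_, ?_⟩
  · rw [frontier_eq_closure_inter_closure]
    exact ⟨subset_closure hs1S.2, hznint⟩
  · rw [dist_eq_norm, dist_eq_norm]
    have heq : x - g s1 = (-s1) • (p - x) := by
      rw [hgdef]
      simp only [neg_smul]
      abel
    rw [heq, norm_smul, Real.norm_eq_abs, abs_neg, abs_of_nonneg hs1S.1.1]
    rw [norm_sub_rev x p]
    have h2 : s1 * ‖p - x‖ ≤ 1 * ‖p - x‖ :=
      mul_le_mul_of_nonneg_right hs1S.1.2 (norm_nonneg _)
    rw [one_mul] at h2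
    exact h2

end Stmt4Aux

open Stmt4Aux Filter

set_option maxHeartbeats 1600000 in
theorem stmt4 {n : ℕ} (hn : 2 ≤ n) (C E : Set (EuclideanSpace ℝ (Fin n)))
    (hC : IsPointedClosedConvexCone C) (hE : IsCPseudoCone C E) :
    IsCAsymptotic C E ↔
      ∀ v ∈ sphere (0 : EuclideanSpace ℝ (Fin n)) 1 ∩ frontier (polarCone C),
        suppFn E v = 0 := by
  obtain ⟨⟨hEne, hEcl, hEcvx, hE0, hEdil⟩, hEC, hrec⟩ := hE
  obtain ⟨y0, hy0⟩ := hEne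
  have hEne' : E.Nonempty := ⟨y0, hy0⟩
  have hCcl : IsClosed C := hC.1
  have hCcvx : Convex ℝ C := hC.2.1
  have hCint : (interior C).Nonempty := hC.2.2.1
  have hCsmul : ∀ l : ℝ, 0 ≤ l → ∀ x ∈ C, l • x ∈ C := hC.2.2.2.1
  have hrecmem : ∀ x ∈ C, ∀ y ∈ E, y + x ∈ E := by
    intro x hx y hy
    rw [← hrec] at hx
    exact hx y hy
  have hn1 : 1 ≤ n := by omega
  have hinv1 : Tendsto (fun m : ℕ => ((m : ℝ) + 1)⁻¹) atTop (nhds 0) := by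
    simpa [one_div] using (tendsto_one_div_add_atTop_nhds_zero_nat :
      Tendsto (fun n : ℕ => 1 / ((n : ℝ) + 1)) atTop (nhds 0))
  have hinv2 : Tendsto (fun m : ℕ => ((m : ℝ) + 2)⁻¹) atTop (nhds 0) :=
    tendsto_inv_atTop_zero.comp (tendsto_atTop_add_const_right _ 2 tendsto_natCast_atTop_atTop)
  constructor
  · rintro ⟨-, -, -, -, -, hasym⟩ v ⟨hvsph, hvfr⟩
    have hvn : ‖v‖ = 1 := mem_sphere_zero_iff_norm.1 hvsph
    have hvpol : v ∈ polarCone C := (isClosed_polarCone C).frontier_subset hvfr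
    have hle : suppFn E v ≤ 0 := suppFn_nonpos hEne' hEC hvpol
    by_contra hne
    have hlt : suppFn E v < 0 := lt_of_le_of_ne hle hne
    set c := -suppFn E v with hcdef
    have hcpos : 0 < c := by rw [hcdef]; linarith
    have hEc : ∀ x ∈ E, ⟪x, v⟫_ℝ ≤ -c := by
      intro x hx
      have := le_suppFn hEC hvpol hx
      rw [hcdef, neg_neg]
      exact this
    obtain ⟨u, huC, hun, huv⟩ := exists_unit_orth hn1 hC hvfr
    obtain ⟨e, he⟩ := hCint
    obtain ⟨γ, hγ, heball⟩ := Metric.mem_nhds_iff.1 (mem_interior_iff_mem_nhds.1 he)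
    have heC : e ∈ C := heball (mem_ball_self hγ)
    have hev : ⟪e, v⟫_ℝ ≤ -(γ/2) := by
      have hmem : e + (γ/2) • v ∈ C := by
        apply heball
        rw [mem_ball, dist_eq_norm]
        have : e + (γ/2) • v - e = (γ/2) • v := by abel
        rw [this, norm_smul, Real.norm_eq_abs, abs_of_pos (by linarith), hvn]
        linarith
      have h1 := hvpol _ hmem
      rw [inner_add_left, real_inner_smul_left, real_inner_self_eq_norm_mul_norm, hvn] at h1
      linarith
    have hevneg : ⟪e, v⟫_ℝ < 0 := lt_of_le_of_lt hev (by linarith)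
    set amin := c / (-⟪e, v⟫_ℝ) with hamindef
    have haminpos : 0 < amin := div_pos hcpos (by linarith)
    obtain ⟨R, hR0, hRprop⟩ := hasym (amin * γ / 2) (by positivity)
    -- threshold for `a • e - y0 ∈ C`
    have hT0 : ∃ T0 : ℝ, 0 ≤ T0 ∧ ∀ a : ℝ, T0 ≤ a → a • e - y0 ∈ C := by
      have ht : Tendsto (fun a : ℝ => e - a⁻¹ • y0) atTop (nhds e) := by
        have h1 : Tendsto (fun a : ℝ => a⁻¹ • y0) atTop (nhds ((0:ℝ) • y0)) :=
          Tendsto.smul_const tendsto_inv_atTop_zero y0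
        simpa using tendsto_const_nhds.sub h1
      have hCnhds : C ∈ nhds e := mem_interior_iff_mem_nhds.1 he
      have hev2 : ∀ᶠ a : ℝ in atTop, e - a⁻¹ • y0 ∈ C := ht.eventually_mem hCnhds
      obtain ⟨T1, hT1⟩ := eventually_atTop.1 hev2
      refine ⟨max T1 1, le_trans zero_le_one (le_max_right _ _), fun a ha => ?_⟩
      have ha1 : (1:ℝ) ≤ a := le_trans (le_max_right _ _) ha
      have hapos : (0:ℝ) < a := by linarith
      have h2 : e - a⁻¹ • y0 ∈ C := hT1 a (le_trans (le_max_left _ _) ha)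
      have h3 := hCsmul a hapos.le _ h2
      have h4 : a • (e - a⁻¹ • y0) = a • e - y0 := by
        rw [smul_sub, smul_inv_smul₀ hapos.ne']
      rwa [h4] at h3
    obtain ⟨T0, hT0nn, hT0p⟩ := hT0
    set t := R + (T0 + 1) * ‖e‖ + 1 with htdef
    have htpos : 0 < t := by
      have h1 : 0 ≤ (T0 + 1) * ‖e‖ := mul_nonneg (by linarith) (norm_nonneg _)
      rw [htdef]; linarith
    have htuC : t • u ∈ C := hCsmul t htpos.le u huC
    set A := {a : ℝ | t • u + a • e ∈ E} with hAdef
    have hAmem : T0 + 1 ∈ A := by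
      have h1 : (T0 + 1) • e - y0 ∈ C := hT0p _ (by linarith)
      have h2 : t • u + ((T0 + 1) • e - y0) ∈ C := cone_add hC htuC h1
      have h3 := hrecmem _ h2 y0 hy0
      have h4 : y0 + (t • u + ((T0 + 1) • e - y0)) = t • u + (T0 + 1) • e := by abel
      rw [h4] at h3
      exact h3
    have hAbdd : ∀ a ∈ A, amin ≤ a := by
      intro a ha
      have h1 : ⟪t • u + a • e, v⟫_ℝ ≤ -c := hEc _ ha
      rw [inner_add_left, real_inner_smul_left, real_inner_smul_left, huv, mul_zero,
        zero_add] at h1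
      rw [hamindef, div_le_iff₀ (by linarith : (0:ℝ) < -⟪e, v⟫_ℝ)]
      have h2 : a * -⟪e, v⟫_ℝ = -(a * ⟪e, v⟫_ℝ) := by ring
      rw [h2]; linarith
    have hAne : A.Nonempty := ⟨T0 + 1, hAmem⟩
    have hAbb : BddBelow A := ⟨amin, fun a ha => hAbdd a ha⟩
    have hAcl : IsClosed A := by
      have : A = (fun a : ℝ => t • u + a • e) ⁻¹' E := rfl
      rw [this]
      exact hEcl.preimage (continuous_const.add (continuous_id.smul continuous_const))
    set a0 := sInf A with ha0def
    have ha0A : a0 ∈ A := hAcl.csInf_mem hAne hAbb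
    have ha0min : amin ≤ a0 := hAbdd _ ha0A
    have ha0pos : 0 < a0 := lt_of_lt_of_le haminpos ha0min
    have ha0le : a0 ≤ T0 + 1 := csInf_le hAbb hAmem
    set x0 := t • u + a0 • e with hx0def
    have hx0E : x0 ∈ E := ha0A
    have hx0fr : x0 ∈ frontier E := by
      rw [frontier_eq_closure_inter_closure]
      refine ⟨subset_closure hx0E, ?_⟩
      have hsc : Tendsto (fun m : ℕ => a0 - ((m : ℝ) + 1)⁻¹) atTop (nhds a0) := by
        simpa using tendsto_const_nhds.sub hinv1
      have hpt : Tendsto (fun m : ℕ => t • u + (a0 - ((m : ℝ) + 1)⁻¹) • e) atTop (nhds x0) := by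
        rw [hx0def]
        exact tendsto_const_nhds.add (hsc.smul_const e)
      refine mem_closure_of_tendsto hpt (Eventually.of_forall fun m => ?_)
      intro hmem
      have h1 : a0 - ((m : ℝ) + 1)⁻¹ ∈ A := hmem
      have h2 := csInf_le hAbb h1
      have h3 : (0:ℝ) < ((m : ℝ) + 1)⁻¹ := by positivity
      rw [← ha0def] at h2
      linarith
    have hx0norm : R ≤ ‖x0‖ := by
      have h1 : ‖t • u‖ ≤ ‖x0‖ + ‖a0 • e‖ := by
        have : t • u = x0 - a0 • e := by rw [hx0def]; abel
        rw [this]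
        exact norm_sub_le _ _
      have h2 : ‖t • u‖ = t := by
        rw [norm_smul, Real.norm_eq_abs, abs_of_pos htpos, hun, mul_one]
      have h3 : ‖a0 • e‖ ≤ (T0 + 1) * ‖e‖ := by
        rw [norm_smul, Real.norm_eq_abs, abs_of_pos ha0pos]
        exact mul_le_mul_of_nonneg_right ha0le (norm_nonneg _)
      rw [h2] at h1
      rw [htdef] at h1
      linarith
    have hdist := hRprop x0 hx0fr hx0norm
    have hfrne : (frontier C).Nonempty := frontierC_nonempty hn1 hC
    obtain ⟨z, hzfr, hzd⟩ := (infDist_lt_iff hfrne).1 hdist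
    -- but every frontier point of C is at distance ≥ amin * γ from x0
    have hzball : dist x0 z < amin * γ := by
      have h : amin * γ / 2 < amin * γ := by nlinarith
      linarith
    have hball2 : ball x0 (amin * γ) ⊆ C := by
      intro w hw
      have hwd : ‖w - x0‖ < amin * γ := by rwa [mem_ball, dist_eq_norm] at hw
      have h3 : e + a0⁻¹ • (w - x0) ∈ ball e γ := by
        rw [mem_ball, dist_eq_norm]
        have heq : e + a0⁻¹ • (w - x0) - e = a0⁻¹ • (w - x0) := by abel
        rw [heq, norm_smul, Real.norm_eq_abs, abs_of_pos (inv_pos.2 ha0pos)]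
        calc a0⁻¹ * ‖w - x0‖ < a0⁻¹ * (amin * γ) :=
              mul_lt_mul_of_pos_left hwd (inv_pos.2 ha0pos)
          _ ≤ a0⁻¹ * (a0 * γ) := by
              apply mul_le_mul_of_nonneg_left
                (mul_le_mul_of_nonneg_right ha0min hγ.le) (inv_nonneg.2 ha0pos.le)
          _ = γ := by field_simp
      have hwe : t • u + a0 • (e + a0⁻¹ • (w - x0)) = w := by
        rw [smul_add, smul_inv_smul₀ ha0pos.ne', hx0def]
        abel
      rw [← hwe]
      exact cone_add hC htuC (hCsmul a0 ha0pos.le _ (heball h3))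
    have hzint : z ∈ interior C :=
      mem_interior.2 ⟨ball x0 (amin * γ), hball2, isOpen_ball, by rwa [mem_ball, dist_comm]⟩
    rw [hCcl.frontier_eq] at hzfr
    exact hzfr.2 hzint
  · intro H
    refine ⟨hEC, hE0, hEcl, hEcvx, ?_, ?_⟩
    · intro hb
      obtain ⟨B, hB⟩ : ∃ B : ℝ, ∀ z ∈ E, ‖z‖ ≤ B := by
        refine isBounded_iff_forall_norm_le.1 ?_
        exact hb
      have hy0ne : y0 ≠ 0 := fun h => hE0 (h ▸ hy0)
      have hy0pos : 0 < ‖y0‖ := norm_pos_iff.2 hy0ne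
      have hBy0 : ‖y0‖ ≤ B := hB y0 hy0
      set l := (B + 1) / ‖y0‖ + 1 with hldef
      have hl1 : (1:ℝ) ≤ l := by
        have h1 : 0 ≤ (B + 1) / ‖y0‖ := div_nonneg (by linarith) (norm_nonneg _)
        rw [hldef]; linarith
      have hmem := hEdil l hl1 y0 hy0
      have hn2 := hB _ hmem
      rw [norm_smul, Real.norm_eq_abs, abs_of_pos (by linarith : (0:ℝ) < l)] at hn2
      have h3 : (B + 1) / ‖y0‖ * ‖y0‖ = B + 1 := div_mul_cancel₀ _ (ne_of_gt hy0pos)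
      have h4 : l * ‖y0‖ = B + 1 + ‖y0‖ := by
        rw [hldef, add_mul, one_mul, h3]
      rw [h4] at hn2
      linarith
    · intro ε hε
      by_contra hcon
      push_neg at hcon
      have hseq : ∀ k : ℕ, ∃ x, x ∈ frontier E ∧ ((k : ℝ) + 1) ≤ ‖x‖ ∧
          ε ≤ infDist x (frontier C) := by
        intro k
        obtain ⟨x, hx1, hx2, hx3⟩ := hcon ((k : ℝ) + 1) (by positivity)
        exact ⟨x, hx1, hx2, hx3⟩
      choose x hxfr hxnorm hxdist using hseq
      have hxE : ∀ k, x k ∈ E := fun k => hEcl.frontier_subset (hxfr k)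
      have hxpos : ∀ k, (0:ℝ) < ‖x k‖ := fun k =>
        lt_of_lt_of_le (by positivity) (hxnorm k)
      -- interior point of E
      obtain ⟨p0, hp0⟩ := hCint
      have hy1 : y0 + p0 ∈ interior E := by
        have hsub : (fun z => y0 + z) '' interior C ⊆ E := by
          rintro _ ⟨z, hz, rfl⟩
          exact hrecmem z (interior_subset hz) y0 hy0
        have hopen : IsOpen ((fun z => y0 + z) '' interior C) :=
          isOpenMap_add_left y0 _ isOpen_interior
        exact interior_maximal hsub hopen ⟨p0, hp0, rfl⟩
      set y1 := y0 + p0 with hy1def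
      -- supporting unit normals
      have hsupp : ∀ k : ℕ, ∃ v : EuclideanSpace ℝ (Fin n), ‖v‖ = 1 ∧
          ∀ a ∈ E, ⟪a, v⟫_ℝ ≤ ⟪x k, v⟫_ℝ := by
        intro k
        have hxknotint : x k ∉ interior E := by
          have h := hxfr k
          rw [hEcl.frontier_eq] at h
          exact h.2
        obtain ⟨f, hf⟩ :=
          geometric_hahn_banach_open_point hEcvx.interior isOpen_interior hxknotint
        set v' := (InnerProductSpace.toDual ℝ (EuclideanSpace ℝ (Fin n))).symm f with hv'def
        have hfv' : ∀ z, ⟪v', z⟫_ℝ = f z := fun z => InnerProductSpace.toDual_symm_apply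
        have hv'ne : v' ≠ 0 := by
          intro h0
          have h1 := hf y1 hy1
          have h2 : f y1 = 0 := by rw [← hfv', h0, inner_zero_left]
          have h3 : f (x k) = 0 := by rw [← hfv', h0, inner_zero_left]
          rw [h2, h3] at h1
          exact lt_irrefl 0 h1
        refine ⟨‖v'‖⁻¹ • v', norm_inv_smul hv'ne, ?_⟩
        intro a ha
        have key : ⟪a, v'⟫_ℝ ≤ ⟪x k, v'⟫_ℝ := by
          have hm : ∀ m : ℕ, ⟪a + ((m : ℝ) + 1)⁻¹ • (y1 - a), v'⟫_ℝ ≤ ⟪x k, v'⟫_ℝ := by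
            intro m
            have h1le : (1:ℝ) ≤ (m : ℝ) + 1 := by
              have : (0:ℝ) ≤ (m : ℝ) := Nat.cast_nonneg m
              linarith
            have hmem : a + ((m : ℝ) + 1)⁻¹ • (y1 - a) ∈ interior E :=
              hEcvx.add_smul_sub_mem_interior ha hy1 ⟨by positivity, inv_le_one_of_one_le₀ h1le⟩
            have h2 := (hf _ hmem).le
            rw [← hfv', ← hfv'] at h2
            rw [real_inner_comm, real_inner_comm (x k) v'] at h2
            exact h2
          have hsc : Tendsto (fun m : ℕ => a + ((m : ℝ) + 1)⁻¹ • (y1 - a)) atTop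
              (nhds a) := by
            have h1 : Tendsto (fun m : ℕ => ((m : ℝ) + 1)⁻¹ • (y1 - a)) atTop
                (nhds ((0:ℝ) • (y1 - a))) := hinv1.smul_const (y1 - a)
            simpa using tendsto_const_nhds.add h1
          have hten : Tendsto (fun m : ℕ => ⟪a + ((m : ℝ) + 1)⁻¹ • (y1 - a), v'⟫_ℝ) atTop
              (nhds ⟪a, v'⟫_ℝ) := hsc.inner tendsto_const_nhds
          exact le_of_tendsto hten (Eventually.of_forall hm)
        rw [real_inner_smul_right, real_inner_smul_right]
        exact mul_le_mul_of_nonneg_left key (inv_nonneg.2 (norm_nonneg _))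
      choose v hvn hvsupp using hsupp
      have hvpol : ∀ k, v k ∈ polarCone C := by
        intro k w hw
        have h1 := hvsupp k _ (hrecmem w hw _ (hxE k))
        rw [inner_add_left] at h1
        linarith
      -- far frontier points are deep inside C by the contradiction hypothesis
      have hxneg : ∀ k, ⟪x k, v k⟫_ℝ ≤ -(ε/2) := by
        intro k
        have hballC : ball (x k) ε ⊆ C := by
          intro p hp
          by_contra hpC
          obtain ⟨z, hzfr, hzle⟩ := exists_frontier_dist_le hCcl (hEC (hxE k)) hpC
          have hd1 : infDist (x k) (frontier C) ≤ dist (x k) z := infDist_le_dist_of_mem hzfr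
          have hd2 : dist (x k) p < ε := by
            rw [mem_ball] at hp
            rw [dist_comm]
            exact hp
          have hd3 := hxdist k
          linarith
        have hpm : x k + (ε/2) • v k ∈ C := by
          apply hballC
          rw [mem_ball, dist_eq_norm]
          have heq : x k + (ε/2) • v k - x k = (ε/2) • v k := by abel
          rw [heq, norm_smul, Real.norm_eq_abs, abs_of_pos (by linarith), hvn k, mul_one]
          linarith
        have h1 := hvpol k _ hpm
        rw [inner_add_left, real_inner_smul_left, real_inner_self_eq_norm_mul_norm,
          hvn k] at h1
        have h2 : (ε/2) * (1 * 1) = ε/2 := by ring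
        rw [h2] at h1
        linarith
      -- compactness: extract limits
      have hvsph : ∀ k, v k ∈ sphere (0 : EuclideanSpace ℝ (Fin n)) 1 := fun k =>
        mem_sphere_zero_iff_norm.2 (hvn k)
      obtain ⟨vl, hvlsph, φ, hφ, hφten⟩ := (isCompact_sphere
        (0 : EuclideanSpace ℝ (Fin n)) 1).tendsto_subseq hvsph
      set u' := fun k : ℕ => ‖x k‖⁻¹ • x k with hu'def
      have hu'mem : ∀ k, u' k ∈ C ∩ sphere (0 : EuclideanSpace ℝ (Fin n)) 1 := by
        intro k
        have hxk0 : x k ≠ 0 := norm_pos_iff.1 (hxpos k)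
        exact ⟨hCsmul _ (inv_nonneg.2 (norm_nonneg _)) _ (hEC (hxE k)),
          mem_sphere_zero_iff_norm.2 (norm_inv_smul hxk0)⟩
      have hKcomp : IsCompact (C ∩ sphere (0 : EuclideanSpace ℝ (Fin n)) 1) :=
        (isCompact_sphere 0 1).inter_left hCcl
      obtain ⟨ul, hul, ψ, hψ, hψten⟩ :=
        hKcomp.tendsto_subseq (x := fun j => u' (φ j)) (fun j => hu'mem (φ j))
      have hφψten : Tendsto (fun j => v (φ (ψ j))) atTop (nhds vl) :=
        hφten.comp hψ.tendsto_atTop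
      -- vl is in the polar cone
      have hvlpol : vl ∈ polarCone C := by
        intro w hw
        have hten : Tendsto (fun j => ⟪w, v (φ (ψ j))⟫_ℝ) atTop (nhds ⟪w, vl⟫_ℝ) :=
          Filter.Tendsto.inner tendsto_const_nhds hφψten
        exact le_of_tendsto hten (Eventually.of_forall fun j => hvpol _ w hw)
      -- support values stay ≤ -ε/2 in the limit
      have hvlE : ∀ a ∈ E, ⟪a, vl⟫_ℝ ≤ -(ε/2) := by
        intro a ha
        have hten : Tendsto (fun j => ⟪a, v (φ (ψ j))⟫_ℝ) atTop (nhds ⟪a, vl⟫_ℝ) :=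
          Filter.Tendsto.inner tendsto_const_nhds hφψten
        refine le_of_tendsto hten (Eventually.of_forall fun j => ?_)
        exact le_trans (hvsupp _ a ha) (hxneg _)
      -- ⟪ul, vl⟫ = 0
      have hc1 : ∀ k, ⟪u' k, v k⟫_ℝ ≤ 0 := by
        intro k
        rw [hu'def, real_inner_smul_left]
        have h0 : ⟪x k, v k⟫_ℝ ≤ 0 := le_trans (hxneg k) (by linarith)
        calc ‖x k‖⁻¹ * ⟪x k, v k⟫_ℝ ≤ ‖x k‖⁻¹ * 0 :=
              mul_le_mul_of_nonneg_left h0 (inv_nonneg.2 (norm_nonneg _))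
          _ = 0 := mul_zero _
      have hc2 : ∀ k : ℕ, -(‖y0‖ * ((k : ℝ) + 1)⁻¹) ≤ ⟪u' k, v k⟫_ℝ := by
        intro k
        have hnpos : (0:ℝ) < (k : ℝ) + 1 := by positivity
        have hy0b : -‖y0‖ ≤ ⟪x k, v k⟫_ℝ := by
          have h1 := hvsupp k y0 hy0
          have h2 : |⟪y0, v k⟫_ℝ| ≤ ‖y0‖ := by
            have := abs_real_inner_le_norm y0 (v k)
            rwa [hvn k, mul_one] at this
          have h3 := abs_le.1 h2
          linarith [h3.1]
        rw [hu'def, real_inner_smul_left]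
        have s1 : ‖x k‖⁻¹ * (-‖y0‖) ≤ ‖x k‖⁻¹ * ⟪x k, v k⟫_ℝ :=
          mul_le_mul_of_nonneg_left hy0b (inv_nonneg.2 (norm_nonneg _))
        have s2 : ‖x k‖⁻¹ ≤ ((k : ℝ) + 1)⁻¹ := inv_anti hnpos (hxnorm k)
        have s3 := mul_le_mul_of_nonneg_right s2 (norm_nonneg y0)
        nlinarith
      have htenc : Tendsto (fun j => ⟪u' (φ (ψ j)), v (φ (ψ j))⟫_ℝ) atTop
          (nhds ⟪ul, vl⟫_ℝ) := Filter.Tendsto.inner hψten hφψten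
      have hle0 : ⟪ul, vl⟫_ℝ ≤ 0 :=
        le_of_tendsto htenc (Eventually.of_forall fun j => hc1 _)
      have hL : Tendsto (fun j : ℕ => -(‖y0‖ * ((j : ℝ) + 1)⁻¹)) atTop (nhds 0) := by
        have h1 : Tendsto (fun j : ℕ => ‖y0‖ * ((j : ℝ) + 1)⁻¹) atTop
            (nhds (‖y0‖ * 0)) := hinv1.const_mul ‖y0‖
        simpa using h1.neg
      have hge0 : (0:ℝ) ≤ ⟪ul, vl⟫_ℝ := by
        refine le_of_tendsto_of_tendsto' hL htenc fun j => ?_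
        have hj : (j : ℝ) ≤ (φ (ψ j) : ℝ) := Nat.cast_le.2 ((hφ.comp hψ).le_apply)
        have h1 : ((φ (ψ j) : ℝ) + 1)⁻¹ ≤ ((j : ℝ) + 1)⁻¹ :=
          inv_anti (by positivity) (by linarith)
        have h2 := mul_le_mul_of_nonneg_left h1 (norm_nonneg y0)
        have h3 := hc2 (φ (ψ j))
        linarith
      have hulvl : ⟪ul, vl⟫_ℝ = 0 := le_antisymm hle0 hge0
      -- vl lies on the frontier of the polar cone
      have hvlfr : vl ∈ frontier (polarCone C) := by
        rw [(isClosed_polarCone C).frontier_eq]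
        refine ⟨hvlpol, ?_⟩
        intro hint
        obtain ⟨δ, hδ, hballp⟩ := Metric.mem_nhds_iff.1 (mem_interior_iff_mem_nhds.1 hint)
        have huln : ‖ul‖ = 1 := mem_sphere_zero_iff_norm.1 hul.2
        have hmemp : vl + (δ/2) • ul ∈ polarCone C := by
          apply hballp
          rw [mem_ball, dist_eq_norm]
          have heq : vl + (δ/2) • ul - vl = (δ/2) • ul := by abel
          rw [heq, norm_smul, Real.norm_eq_abs, abs_of_pos (by linarith), huln, mul_one]
          linarith
        have h1 := hmemp ul hul.1
        rw [inner_add_right, real_inner_smul_right, real_inner_self_eq_norm_mul_norm,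
          huln, hulvl] at h1
        have : (δ/2) * (1 * 1) = δ/2 := by ring
        rw [this] at h1
        linarith
      have hH := H vl ⟨hvlsph, hvlfr⟩
      have hfinal : suppFn E vl ≤ -(ε/2) :=
        csSup_le (hEne'.image _) (by rintro _ ⟨a, ha, rfl⟩; exact hvlE a ha)
      rw [hH] at hfinal
      linarith
end
end

section
/- Let C be a pointed closed convex cone in ℝⁿ with nonempty interior and let E be a C-pseudo-cone. For every u ∈ S^{n−1} ∩ int C the radial function ρ_E(u) = inf{r > 0 : ru ∈ E} is finite and ρ_E(u)·u ∈ E, and for every compact subset ω ⊆ S^{n−1} ∩ int C the radial map u ↦ ρ_E(u)·u is Lipschitz continuous on ω (i.e., there exists K ≥ 0 with |ρ_E(u₁)u₁ − ρ_E(u₂)u₂| ≤ K|u₁ − u₂| for all u₁, u₂ ∈ ω). -/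
open Set MeasureTheory Metric Bornology
open scoped InnerProductSpace ENNReal NNReal Pointwise

noncomputable section

theorem stmt6 {n : ℕ} (hn : 2 ≤ n) (C E : Set (EuclideanSpace ℝ (Fin n)))
    (hC : IsPointedClosedConvexCone C) (hE : IsCPseudoCone C E) :
    (∀ u ∈ sphere (0 : EuclideanSpace ℝ (Fin n)) 1 ∩ interior C,
      (∃ r : ℝ, 0 < r ∧ r • u ∈ E) ∧ radialFn E u • u ∈ E) ∧
    ∀ ω : Set (EuclideanSpace ℝ (Fin n)),
      ω ⊆ sphere (0 : EuclideanSpace ℝ (Fin n)) 1 ∩ interior C → IsCompact ω →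
      ∃ K : ℝ, 0 ≤ K ∧ ∀ u₁ ∈ ω, ∀ u₂ ∈ ω,
        ‖radialFn E u₁ • u₁ - radialFn E u₂ • u₂‖ ≤ K * ‖u₁ - u₂‖ := by
  obtain ⟨⟨⟨y, hy⟩, hEclosed, hEconv, h0E, hdil⟩, hEC, hrec⟩ := hE
  have hCcone : ∀ l : ℝ, 0 ≤ l → ∀ x ∈ C, l • x ∈ C := hC.2.2.2.1
  have hadd : ∀ x ∈ E, ∀ c ∈ C, x + c ∈ E := by
    intro x hx c hc
    rw [← hrec] at hc
    exact hc x hx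
  -- rays into C (with a ball of radius ε around the direction inside C) hit E
  have hray : ∀ (u : EuclideanSpace ℝ (Fin n)) (ε : ℝ), 0 < ε →
      ball u ε ⊆ C → ∀ r : ℝ, ‖y‖ / ε < r → r • u ∈ E := by
    intro u ε hε hball r hr
    have hr0 : 0 < r := lt_of_le_of_lt (div_nonneg (norm_nonneg y) hε.le) hr
    have h1 : u - r⁻¹ • y ∈ ball u ε := by
      rw [mem_ball_iff_norm]
      have h2 : ‖u - r⁻¹ • y - u‖ = ‖y‖ / r := by
        rw [sub_sub_cancel_left, norm_neg, norm_smul, norm_inv, Real.norm_eq_abs,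
          abs_of_pos hr0, div_eq_inv_mul]
      rw [h2, div_lt_iff₀ hr0]
      rw [div_lt_iff₀ hε] at hr
      linarith [mul_comm ε r]
    have h2 : r • (u - r⁻¹ • y) ∈ C := hCcone r hr0.le _ (hball h1)
    have h3 : r • (u - r⁻¹ • y) = r • u - y := by
      rw [smul_sub, smul_inv_smul₀ hr0.ne']
    rw [h3] at h2
    have := hadd y hy _ h2
    simpa using this
  -- main pointwise lemma
  have hkey : ∀ (u : EuclideanSpace ℝ (Fin n)) (ε : ℝ), 0 < ε → ball u ε ⊆ C →
      0 < radialFn E u ∧ radialFn E u • u ∈ E ∧ radialFn E u ≤ ‖y‖ / ε + 1 := by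
    intro u ε hε hball
    have hne : (‖y‖ / ε + 1) ∈ {r : ℝ | 0 < r ∧ r • u ∈ E} := by
      constructor
      · positivity
      · exact hray u ε hε hball _ (lt_add_one _)
    have hbdd : BddBelow {r : ℝ | 0 < r ∧ r • u ∈ E} := ⟨0, fun r hr => hr.1.le⟩
    have hclosed : IsClosed {r : ℝ | r • u ∈ E} :=
      hEclosed.preimage (continuous_id.smul continuous_const)
    have hmem : radialFn E u • u ∈ E := by
      have h1 : radialFn E u ∈ closure {r : ℝ | 0 < r ∧ r • u ∈ E} :=
        csInf_mem_closure ⟨_, hne⟩ hbdd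
      exact closure_minimal (fun r hr => hr.2) hclosed h1
    have hpos0 : 0 ≤ radialFn E u := le_csInf ⟨_, hne⟩ fun r hr => hr.1.le
    have hpos : 0 < radialFn E u := by
      rcases hpos0.lt_or_eq with h | h
      · exact h
      · exfalso; apply h0E
        rw [← h] at hmem
        simpa using hmem
    exact ⟨hpos, hmem, csInf_le hbdd hne⟩
  constructor
  · rintro u ⟨-, hu2⟩
    obtain ⟨ε, hε, hball⟩ := Metric.isOpen_iff.mp isOpen_interior u hu2
    have hballC : ball u ε ⊆ C := hball.trans interior_subset
    obtain ⟨hpos, hmem, -⟩ := hkey u ε hε hballC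
    exact ⟨⟨_, hpos, hmem⟩, hmem⟩
  · intro ω hω hωc
    obtain ⟨ε, hε, hth⟩ := hωc.exists_thickening_subset_open isOpen_interior
      (fun u hu => (hω hu).2)
    have hballC : ∀ u ∈ ω, ball u ε ⊆ C :=
      fun u hu => (ball_subset_thickening hu ε).trans (hth.trans interior_subset)
    obtain ⟨M, hM0, hMgt⟩ : ∃ M : ℝ, 0 < M ∧ ‖y‖ / ε + 1 < M :=
      ⟨‖y‖ / ε + 2, by positivity, by linarith⟩
    have hub : ∀ u ∈ ω, 0 < radialFn E u ∧ radialFn E u • u ∈ E ∧ radialFn E u < M := by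
      intro u hu
      obtain ⟨h1, h2, h3⟩ := hkey u ε hε (hballC u hu)
      exact ⟨h1, h2, by linarith⟩
    -- key Lipschitz estimate on the radial function
    have hest : ∀ u₁ ∈ ω, ∀ u₂ ∈ ω,
        radialFn E u₂ ≤ radialFn E u₁ + (M / ε) * ‖u₁ - u₂‖ := by
      intro u₁ hu₁ u₂ hu₂
      obtain ⟨hρ₁, hx₁, hρ₁M⟩ := hub u₁ hu₁
      obtain ⟨hρ₂, -, -⟩ := hub u₂ hu₂
      rcases eq_or_ne u₁ u₂ with rfl | hne
      · simp
      have hd : 0 < ‖u₁ - u₂‖ := by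
        rw [norm_pos_iff]
        exact sub_ne_zero.mpr hne
      set δ : ℝ := M / ε * ‖u₁ - u₂‖ with hδ
      have hδ0 : 0 < δ := by positivity
      set v : EuclideanSpace ℝ (Fin n) := u₂ + (radialFn E u₁ / δ) • (u₂ - u₁) with hv
      have hvball : v ∈ ball u₂ ε := by
        rw [mem_ball_iff_norm]
        have h1 : ‖v - u₂‖ = radialFn E u₁ / δ * ‖u₂ - u₁‖ := by
          rw [hv, add_sub_cancel_left, norm_smul, Real.norm_eq_abs,
            abs_of_pos (div_pos hρ₁ hδ0)]
        rw [h1, norm_sub_rev]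
        have h2 : radialFn E u₁ / δ * ‖u₁ - u₂‖ = radialFn E u₁ * ε / M := by
          rw [hδ]; field_simp
        rw [h2, div_lt_iff₀ hM0]
        nlinarith
      have hvC : v ∈ C := hballC u₂ hu₂ hvball
      have hwC : δ • v ∈ C := hCcone δ hδ0.le v hvC
      have hsum : radialFn E u₁ • u₁ + δ • v = (radialFn E u₁ + δ) • u₂ := by
        rw [hv, smul_add, smul_smul, mul_div_cancel₀ _ hδ0.ne']
        module
      have hmem2 : (radialFn E u₁ + δ) • u₂ ∈ E := by
        rw [← hsum]
        exact hadd _ hx₁ _ hwC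
      have hbdd : BddBelow {r : ℝ | 0 < r ∧ r • u₂ ∈ E} := ⟨0, fun r hr => hr.1.le⟩
      have : radialFn E u₂ ≤ radialFn E u₁ + δ :=
        csInf_le hbdd ⟨by positivity, hmem2⟩
      linarith [this, hδ.symm ▸ le_refl δ]
    refine ⟨M + M / ε, by positivity, ?_⟩
    intro u₁ hu₁ u₂ hu₂
    obtain ⟨hρ₁, -, hρ₁M⟩ := hub u₁ hu₁
    obtain ⟨hρ₂, -, hρ₂M⟩ := hub u₂ hu₂
    have hnu₂ : ‖u₂‖ = 1 := by
      have := (hω hu₂).1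
      simpa [mem_sphere_iff_norm] using this
    have habs : |radialFn E u₁ - radialFn E u₂| ≤ M / ε * ‖u₁ - u₂‖ := by
      rw [abs_sub_le_iff]
      constructor
      · have := hest u₂ hu₂ u₁ hu₁
        rw [norm_sub_rev] at this
        linarith
      · have := hest u₁ hu₁ u₂ hu₂
        linarith
    have hsplit : radialFn E u₁ • u₁ - radialFn E u₂ • u₂ =
        radialFn E u₁ • (u₁ - u₂) + (radialFn E u₁ - radialFn E u₂) • u₂ := by
      module
    rw [hsplit]
    calc ‖radialFn E u₁ • (u₁ - u₂) + (radialFn E u₁ - radialFn E u₂) • u₂‖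
        ≤ ‖radialFn E u₁ • (u₁ - u₂)‖ + ‖(radialFn E u₁ - radialFn E u₂) • u₂‖ :=
          norm_add_le _ _
      _ = radialFn E u₁ * ‖u₁ - u₂‖ + |radialFn E u₁ - radialFn E u₂| := by
          rw [norm_smul, norm_smul, Real.norm_eq_abs, Real.norm_eq_abs,
            abs_of_pos hρ₁, hnu₂, mul_one]
      _ ≤ M * ‖u₁ - u₂‖ + M / ε * ‖u₁ - u₂‖ := by
          have := mul_le_mul_of_nonneg_right hρ₁M.le (norm_nonneg (u₁ - u₂))
          linarith [habs]
      _ = (M + M / ε) * ‖u₁ - u₂‖ := by ring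
end
end

section
/- Let C be a pointed closed convex cone in ℝⁿ with nonempty interior, let q ∈ ℝ, let Θ : C ∖ {0} → (0, ∞) be a continuous function homogeneous of degree −q, and let E be a C-pseudo-cone. Then the weighted volume V_Θ(E) = ∫_E Θ(x) dH^n(x) is finite if q > n, and V_Θ(E) = +∞ if q ≤ n. -/
open Set MeasureTheory Metric Bornology
open scoped InnerProductSpace ENNReal NNReal Pointwise

noncomputable section

set_option maxHeartbeats 2000000 in
theorem stmt7 {n : ℕ} (hn : 2 ≤ n) (C E : Set (EuclideanSpace ℝ (Fin n)))
    (hC : IsPointedClosedConvexCone C) (hE : IsCPseudoCone C E)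
    (q : ℝ) (Θ : EuclideanSpace ℝ (Fin n) → ℝ)
    (hΘpos : ∀ x ∈ C \ {0}, 0 < Θ x)
    (hΘcont : ContinuousOn Θ (C \ {0}))
    (hΘhom : ∀ l : ℝ, 0 < l → ∀ x ∈ C \ {0}, Θ (l • x) = l ^ (-q) * Θ x) :
    ((n : ℝ) < q → ∫⁻ x in E, ENNReal.ofReal (Θ x) ∂volume < ⊤) ∧
    (q ≤ (n : ℝ) → ∫⁻ x in E, ENNReal.ofReal (Θ x) ∂volume = ⊤) := by
  obtain ⟨⟨hEne, hEcl, hEconv, hE0, hEdil⟩, hEC, hrec⟩ := hE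
  obtain ⟨hCcl, hCconv, hCint, hCcone, hCpoint⟩ := hC
  have hn0 : (0:ℝ) < n := by exact_mod_cast lt_of_lt_of_le (by norm_num : 0 < 2) hn
  set δ : ℝ := infDist 0 E with hδdef
  have δpos : 0 < δ := (hEcl.notMem_iff_infDist_pos hEne).1 hE0
  have hδle : ∀ x ∈ E, δ ≤ ‖x‖ := by
    intro x hx
    simpa [dist_zero_left] using infDist_le_dist_of_mem (x := (0:EuclideanSpace ℝ (Fin n))) hx
  have hxE : ∀ x ∈ E, x ∈ C ∧ x ≠ 0 ∧ 0 < ‖x‖ := by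
    intro x hx
    have hxC := hEC hx
    have hx0 : x ≠ 0 := fun h => hE0 (h ▸ hx)
    exact ⟨hxC, hx0, norm_pos_iff.2 hx0⟩
  have hnorm : ∀ x ∈ E, (‖x‖⁻¹ • x) ∈ (C ∩ sphere 0 1) ∧ Θ x = ‖x‖ ^ (-q) * Θ (‖x‖⁻¹ • x) := by
    intro x hx
    obtain ⟨hxC, hx0, hxn⟩ := hxE x hx
    have huC : ‖x‖⁻¹ • x ∈ C := hCcone _ (by positivity) x hxC
    have hun : ‖(‖x‖⁻¹ • x)‖ = 1 := by
      rw [norm_smul, norm_inv, norm_norm, inv_mul_cancel₀ hxn.ne']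
    have huS : (‖x‖⁻¹ • x) ∈ C ∩ sphere 0 1 := ⟨huC, by simpa [mem_sphere_zero_iff_norm] using hun⟩
    have hu0 : (‖x‖⁻¹ • x) ≠ 0 := by
      intro h; rw [h, norm_zero] at hun; norm_num at hun
    have := hΘhom ‖x‖ hxn (‖x‖⁻¹ • x) ⟨huC, hu0⟩
    rw [smul_inv_smul₀ hxn.ne'] at this
    exact ⟨huS, this⟩
  have hSc : IsCompact (C ∩ sphere (0:EuclideanSpace ℝ (Fin n)) 1) :=
    (isCompact_sphere 0 1).inter_left hCcl
  obtain ⟨e, heE⟩ := hEne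
  have hSne : (C ∩ sphere (0:EuclideanSpace ℝ (Fin n)) 1).Nonempty :=
    ⟨_, (hnorm e heE).1⟩
  have hSsub : C ∩ sphere (0:EuclideanSpace ℝ (Fin n)) 1 ⊆ C \ {0} := by
    rintro u ⟨huC, huS⟩
    refine ⟨huC, ?_⟩
    simp only [mem_singleton_iff]
    intro h
    rw [mem_sphere_zero_iff_norm, h, norm_zero] at huS; norm_num at huS
  have hΘcS : ContinuousOn Θ (C ∩ sphere (0:EuclideanSpace ℝ (Fin n)) 1) := hΘcont.mono hSsub
  constructor
  · -- finiteness for q > n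
    intro hq
    have hq0 : 0 < q := hn0.trans hq
    obtain ⟨a, haS, hM⟩ := hSc.exists_isMaxOn hSne hΘcS
    set M : ℝ := Θ a with hMdef
    have hMpos : 0 < M := hΘpos a (hSsub haS)
    set K : ℝ := δ⁻¹ + 1 with hKdef
    have hKpos : 0 < K := by positivity
    -- pointwise bound on E
    have hbound : ∀ x ∈ E, Θ x ≤ (M * K ^ q) * (1 + ‖x‖) ^ (-q) := by
      intro x hx
      obtain ⟨huS, hΘx⟩ := hnorm x hx
      obtain ⟨hxC, hx0, hxn⟩ := hxE x hx
      have h1 : Θ (‖x‖⁻¹ • x) ≤ M := hM huS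
      have h2 : (1 + ‖x‖) / K ≤ ‖x‖ := by
        rw [div_le_iff₀ hKpos]
        have : 1 ≤ ‖x‖ / δ := (one_le_div δpos).2 (hδle x hx)
        have h3 : ‖x‖ * K = ‖x‖ / δ + ‖x‖ := by
          rw [hKdef, mul_add, mul_one, div_eq_mul_inv]
        rw [h3]; linarith
      have h4 : ‖x‖ ^ (-q) ≤ ((1 + ‖x‖) / K) ^ (-q) :=
        Real.rpow_le_rpow_of_nonpos (by positivity) h2 (by linarith)
      have h5 : ((1 + ‖x‖) / K) ^ (-q) = (1 + ‖x‖) ^ (-q) * K ^ q := by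
        rw [Real.div_rpow (by positivity) hKpos.le, Real.rpow_neg hKpos.le,
          div_eq_mul_inv, inv_inv]
      have h6 : 0 < Θ (‖x‖⁻¹ • x) := hΘpos _ (hSsub huS)
      calc Θ x = ‖x‖ ^ (-q) * Θ (‖x‖⁻¹ • x) := hΘx
        _ ≤ ((1 + ‖x‖) ^ (-q) * K ^ q) * M := by
            rw [← h5]
            exact mul_le_mul h4 h1 h6.le (by positivity)
        _ = (M * K ^ q) * (1 + ‖x‖) ^ (-q) := by ring
    have hInt : Integrable (fun x : EuclideanSpace ℝ (Fin n) => (M * K ^ q) * (1 + ‖x‖) ^ (-q)) := by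
      refine Integrable.const_mul ?_ _
      apply integrable_one_add_norm (E := EuclideanSpace ℝ (Fin n))
      rw [finrank_euclideanSpace]; simpa using hq
    calc ∫⁻ x in E, ENNReal.ofReal (Θ x) ∂volume
        ≤ ∫⁻ x in E, ENNReal.ofReal ((M * K ^ q) * (1 + ‖x‖) ^ (-q)) ∂volume := by
          exact setLIntegral_mono' hEcl.measurableSet fun x hx =>
            ENNReal.ofReal_le_ofReal (hbound x hx)
      _ ≤ ∫⁻ x, ENNReal.ofReal ((M * K ^ q) * (1 + ‖x‖) ^ (-q)) ∂volume :=
          setLIntegral_le_lintegral _ _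
      _ < ⊤ := hInt.lintegral_lt_top
  · -- infinite for q ≤ n
    intro hq
    obtain ⟨b, hbS, hm⟩ := hSc.exists_isMinOn hSne hΘcS
    set m : ℝ := Θ b with hmdef
    have hmpos : 0 < m := hΘpos b (hSsub hbS)
    -- interior point of C
    obtain ⟨z, hz⟩ := hCint
    obtain ⟨r₀, hr₀, hball⟩ := Metric.isOpen_iff.1 isOpen_interior z hz
    have hballC : ball z r₀ ⊆ C := hball.trans interior_subset
    have hz0 : z ≠ 0 := by
      intro h
      subst h
      set v : EuclideanSpace ℝ (Fin n) := (r₀/2) • EuclideanSpace.single (⟨0, by omega⟩ : Fin n) (1:ℝ) with hv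
      have hvn : ‖v‖ = r₀ / 2 := by
        rw [hv, norm_smul, EuclideanSpace.norm_single]
        simp [Real.norm_eq_abs, abs_div, abs_of_pos hr₀]
      have hvC : v ∈ C := hballC (by simp [mem_ball_zero_iff, hvn]; linarith)
      have hvC' : -v ∈ C := hballC (by simp [mem_ball_zero_iff, hvn]; linarith)
      have : v ∈ C ∩ (-C) := ⟨hvC, by simpa [Set.mem_neg] using hvC'⟩
      rw [hCpoint] at this
      simp only [mem_singleton_iff] at this
      rw [this, norm_zero] at hvn
      linarith
    have hzn : 0 < ‖z‖ := norm_pos_iff.2 hz0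
    set r : ℝ := min (r₀/2) (‖z‖/4) with hrdef
    have hrpos : 0 < r := by positivity
    have hr4 : 4 * r ≤ ‖z‖ := by
      have := min_le_right (r₀/2) (‖z‖/4); rw [← hrdef] at this; linarith
    have hballr : closedBall z r ⊆ C := by
      refine (closedBall_subset_ball ?_).trans hballC
      have := min_le_left (r₀/2) (‖z‖/4); rw [← hrdef] at this; linarith
    set c : ℝ := ‖e‖ + ‖z‖ + r with hcdef
    have hcpos : 0 < c := by positivity
    -- the balls
    set B : ℕ → Set (EuclideanSpace ℝ (Fin n)) :=
      fun k => closedBall (e + (2:ℝ)^k • z) ((2:ℝ)^k * r) with hBdef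
    have h2k : ∀ k : ℕ, (1:ℝ) ≤ 2^k := fun k => one_le_pow₀ (by norm_num)
    have hBE : ∀ k, B k ⊆ E := by
      intro k x hx
      have hw : x - e ∈ closedBall ((2:ℝ)^k • z) ((2:ℝ)^k * r) := by
        rw [mem_closedBall] at hx ⊢
        rw [dist_eq_norm] at hx ⊢
        convert hx using 2
        abel
      have hw2 : x - e ∈ (2:ℝ)^k • closedBall z r := by
        rw [smul_closedBall _ _ hrpos.le]
        simpa [Real.norm_of_nonneg (by positivity : (0:ℝ) ≤ 2^k)] using hw
      obtain ⟨u, huB, huw⟩ := hw2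
      have : x - e ∈ C := huw ▸ hCcone _ (by positivity) u (hballr huB)
      have hrc : x - e ∈ recCone E := hrec.symm ▸ this
      have := hrc e heE
      simpa using this
    have hBdisj : Pairwise (Function.onFun Disjoint B) := by
      have key : ∀ k j : ℕ, k < j → Disjoint (B k) (B j) := by
        intro k j hkj
        apply closedBall_disjoint_closedBall
        rw [dist_eq_norm]
        have hc : e + (2:ℝ)^k • z - (e + (2:ℝ)^j • z) = ((2:ℝ)^k - 2^j) • z := by
          rw [sub_smul]; abel
        rw [hc, norm_smul, Real.norm_eq_abs,
          abs_of_nonpos (by nlinarith [pow_le_pow_right₀ (by norm_num : (1:ℝ) ≤ 2) hkj.le] : (2:ℝ)^k - 2^j ≤ 0)]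
        have h2j : (2:ℝ) * 2^k ≤ 2^j := by
          calc (2:ℝ) * 2^k = 2^(k+1) := by ring
            _ ≤ 2^j := pow_le_pow_right₀ (by norm_num) hkj
        nlinarith [h2k k, h2k j, hzn, hrpos]
      intro k j hkj
      rcases lt_or_gt_of_ne hkj with h | h
      · exact key k j h
      · exact (key j k h).symm
    -- pointwise lower bound
    have hup : ∀ k, ∀ x ∈ B k, ‖x‖ ≤ c * 2^k := by
      intro k x hx
      rw [mem_closedBall, dist_eq_norm] at hx
      have h1 : ‖x‖ ≤ ‖e + (2:ℝ)^k • z‖ + 2^k * r := by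
        calc ‖x‖ = ‖(x - (e + (2:ℝ)^k • z)) + (e + (2:ℝ)^k • z)‖ := by
              congr 1; abel
          _ ≤ ‖x - (e + (2:ℝ)^k • z)‖ + ‖e + (2:ℝ)^k • z‖ := norm_add_le _ _
          _ ≤ 2^k * r + ‖e + (2:ℝ)^k • z‖ := by linarith
          _ = ‖e + (2:ℝ)^k • z‖ + 2^k * r := by ring
      have h2 : ‖e + (2:ℝ)^k • z‖ ≤ ‖e‖ + 2^k * ‖z‖ := by
        calc ‖e + (2:ℝ)^k • z‖ ≤ ‖e‖ + ‖(2:ℝ)^k • z‖ := norm_add_le _ _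
          _ = ‖e‖ + 2^k * ‖z‖ := by
              rw [norm_smul, Real.norm_of_nonneg (by positivity : (0:ℝ) ≤ 2^k)]
      have := h2k k
      calc ‖x‖ ≤ ‖e‖ + 2^k * ‖z‖ + 2^k * r := by linarith
        _ ≤ 2^k * ‖e‖ + 2^k * ‖z‖ + 2^k * r := by nlinarith [norm_nonneg e]
        _ = c * 2^k := by rw [hcdef]; ring
    have hlow : ∀ k, ∀ x ∈ B k, m * min (δ ^ (-q)) ((c * 2^k) ^ (-q)) ≤ Θ x := by
      intro k x hx
      have hxEk : x ∈ E := hBE k hx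
      obtain ⟨huS, hΘx⟩ := hnorm x hxEk
      obtain ⟨hxC, hx0, hxn⟩ := hxE x hxEk
      have hδx : δ ≤ ‖x‖ := hδle x hxEk
      have hxc : ‖x‖ ≤ c * 2^k := hup k x hx
      have hmin : min (δ ^ (-q)) ((c * 2^k) ^ (-q)) ≤ ‖x‖ ^ (-q) := by
        rcases le_total q 0 with hq' | hq'
        · exact le_trans (min_le_left _ _)
            (Real.rpow_le_rpow δpos.le hδx (by linarith))
        · exact le_trans (min_le_right _ _)
            (Real.rpow_le_rpow_of_nonpos hxn hxc (by linarith))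
      have hmΘ : m ≤ Θ (‖x‖⁻¹ • x) := hm huS
      have h6 : 0 < Θ (‖x‖⁻¹ • x) := hΘpos _ (hSsub huS)
      calc m * min (δ ^ (-q)) ((c * 2^k) ^ (-q))
          ≤ Θ (‖x‖⁻¹ • x) * (‖x‖ ^ (-q)) := by
            apply mul_le_mul hmΘ hmin _ h6.le
            exact le_min (Real.rpow_nonneg δpos.le _) (Real.rpow_nonneg (by positivity) _)
        _ = Θ x := by rw [hΘx]; ring
    -- volume of B k
    set V : ℝ≥0∞ := volume (ball (0:EuclideanSpace ℝ (Fin n)) 1) with hVdef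
    have hVpos : 0 < V := measure_ball_pos _ _ one_pos
    have hvolB : ∀ k, volume (B k) = ENNReal.ofReal (((2:ℝ)^k * r) ^ n) * V := by
      intro k
      have hBk : B k = closedBall (e + (2:ℝ)^k • z) ((2:ℝ)^k * r) := by rw [hBdef]
      rw [hBk, Measure.addHaar_closedBall volume _ (by positivity : (0:ℝ) ≤ (2:ℝ)^k * r),
        finrank_euclideanSpace, Fintype.card_fin, hVdef]
    -- lower bound for each integral
    set γ : ℝ≥0∞ := ENNReal.ofReal (m * min (δ ^ (-q)) (c ^ (-q)) * r ^ n) * V with hγdef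
    have hγ0 : γ ≠ 0 := by
      rw [hγdef]
      apply mul_ne_zero _ hVpos.ne'
      have h1 : 0 < min (δ ^ (-q)) (c ^ (-q)) :=
        lt_min (Real.rpow_pos_of_pos δpos _) (Real.rpow_pos_of_pos hcpos _)
      exact (ENNReal.ofReal_pos.2 (mul_pos (mul_pos hmpos h1) (by positivity))).ne'
    have hterm : ∀ k, γ ≤ ∫⁻ x in B k, ENNReal.ofReal (Θ x) ∂volume := by
      intro k
      have step1 : ENNReal.ofReal (m * min (δ ^ (-q)) ((c * 2^k) ^ (-q))) * volume (B k)
          ≤ ∫⁻ x in B k, ENNReal.ofReal (Θ x) ∂volume := by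
        rw [← setLIntegral_const (B k) _]
        exact setLIntegral_mono' measurableSet_closedBall fun x hx =>
          ENNReal.ofReal_le_ofReal (hlow k x hx)
      refine le_trans ?_ step1
      rw [hvolB k, hγdef, ← mul_assoc]
      apply mul_le_mul_left _ V
      rw [← ENNReal.ofReal_mul (by positivity)]
      apply ENNReal.ofReal_le_ofReal
      -- real inequality
      have hP : (1:ℝ) ≤ ((2:ℝ)^k) ^ n := one_le_pow₀ (h2k k)
      have key : min (δ ^ (-q)) (c ^ (-q)) * r ^ n
          ≤ min (δ ^ (-q)) ((c * 2^k) ^ (-q)) * (((2:ℝ)^k * r) ^ n) := by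
        have hre : (((2:ℝ)^k * r) ^ n) = ((2:ℝ)^k) ^ n * r ^ n := by ring
        rw [hre, ← mul_assoc]
        apply mul_le_mul_of_nonneg_right _ (by positivity)
        have hA : δ ^ (-q) ≤ δ ^ (-q) * ((2:ℝ)^k) ^ n := by
          nlinarith [Real.rpow_nonneg δpos.le (-q), hP]
        have hB2 : c ^ (-q) ≤ (c * 2^k) ^ (-q) * ((2:ℝ)^k) ^ n := by
          rw [Real.mul_rpow hcpos.le (by positivity)]
          have hcast : (((2:ℝ)^k) ^ n : ℝ) = ((2:ℝ)^k) ^ (n:ℝ) := by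
            rw [Real.rpow_natCast]
          rw [mul_assoc, hcast, ← Real.rpow_add (by positivity)]
          have h1le : (1:ℝ) ≤ ((2:ℝ)^k) ^ (-q + n) :=
            Real.one_le_rpow (h2k k) (by linarith)
          nlinarith [Real.rpow_pos_of_pos hcpos (-q)]
        calc min (δ ^ (-q)) (c ^ (-q))
            ≤ min (δ ^ (-q) * ((2:ℝ)^k) ^ n) ((c * 2^k) ^ (-q) * ((2:ℝ)^k) ^ n) :=
              le_min ((min_le_left _ _).trans hA) ((min_le_right _ _).trans hB2)
          _ = min (δ ^ (-q)) ((c * 2^k) ^ (-q)) * ((2:ℝ)^k) ^ n := by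
              rw [min_mul_of_nonneg _ _ (by positivity : (0:ℝ) ≤ ((2:ℝ)^k) ^ n)]
      calc m * min (δ ^ (-q)) (c ^ (-q)) * r ^ n
          = m * (min (δ ^ (-q)) (c ^ (-q)) * r ^ n) := by ring
        _ ≤ m * (min (δ ^ (-q)) ((c * 2^k) ^ (-q)) * (((2:ℝ)^k * r) ^ n)) :=
            mul_le_mul_of_nonneg_left key hmpos.le
        _ = m * min (δ ^ (-q)) ((c * 2^k) ^ (-q)) * (((2:ℝ)^k * r) ^ n) := by ring
    -- conclude
    have hsum : (⊤ : ℝ≥0∞) ≤ ∫⁻ x in ⋃ k, B k, ENNReal.ofReal (Θ x) ∂volume := by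
      rw [lintegral_iUnion (fun k => measurableSet_closedBall) hBdisj]
      calc (⊤:ℝ≥0∞) = ∑' _ : ℕ, γ := (ENNReal.tsum_const_eq_top_of_ne_zero hγ0).symm
        _ ≤ ∑' k, ∫⁻ x in B k, ENNReal.ofReal (Θ x) ∂volume := ENNReal.tsum_le_tsum hterm
    have hsub : (⋃ k, B k) ⊆ E := iUnion_subset hBE
    have : ∫⁻ x in ⋃ k, B k, ENNReal.ofReal (Θ x) ∂volume
        ≤ ∫⁻ x in E, ENNReal.ofReal (Θ x) ∂volume := lintegral_mono_set hsub
    exact top_le_iff.1 (hsum.trans this)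
end
end

section
/- Let C be a pointed closed convex cone in ℝⁿ with nonempty interior, let q ≥ n, let Θ : C ∖ {0} → (0, ∞) be a continuous function homogeneous of degree −q, and let E be a C-pseudo-cone. Then ∫_{(C ∖ E) ∩ B} Θ(x) dH^n(x) = +∞, where B is the closed Euclidean unit ball; consequently the weighted co-volume ∫_{C ∖ E} Θ(x) dH^n(x) = +∞. -/
open Set MeasureTheory Metric Bornology
open scoped InnerProductSpace ENNReal NNReal Pointwise

noncomputable section

private lemma rpow_anti_aux {a b z : ℝ} (ha : 0 < a) (hab : a ≤ b) (hz : z ≤ 0) :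
    b ^ z ≤ a ^ z := by
  have hb : 0 < b := ha.trans_le hab
  rw [← neg_neg z, Real.rpow_neg ha.le, Real.rpow_neg hb.le]
  have h1 : a ^ (-z) ≤ b ^ (-z) := Real.rpow_le_rpow ha.le hab (neg_nonneg.2 hz)
  have h2 : 0 < a ^ (-z) := Real.rpow_pos_of_pos ha _
  exact inv_anti₀ h2 h1

set_option maxHeartbeats 1000000 in
theorem stmt8 {n : ℕ} (hn : 2 ≤ n) (C E : Set (EuclideanSpace ℝ (Fin n)))
    (hC : IsPointedClosedConvexCone C) (hE : IsCPseudoCone C E)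
    (q : ℝ) (hq : (n : ℝ) ≤ q) (Θ : EuclideanSpace ℝ (Fin n) → ℝ)
    (hΘpos : ∀ x ∈ C \ {0}, 0 < Θ x)
    (hΘcont : ContinuousOn Θ (C \ {0}))
    (hΘhom : ∀ l : ℝ, 0 < l → ∀ x ∈ C \ {0}, Θ (l • x) = l ^ (-q) * Θ x) :
    (∫⁻ x in (C \ E) ∩ closedBall (0 : EuclideanSpace ℝ (Fin n)) 1,
        ENNReal.ofReal (Θ x) ∂volume = ⊤) ∧
    ∫⁻ x in C \ E, ENNReal.ofReal (Θ x) ∂volume = ⊤ := by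
  obtain ⟨hCclosed, hCconv, hCint, hCcone, hCpointed⟩ := hC
  obtain ⟨⟨hEne, hEclosed, hEconv, hE0, hEdil⟩, hEC, hErec⟩ := hE
  have hq0 : (0:ℝ) ≤ q := le_trans (by positivity) hq
  -- a ball around the origin avoiding E
  obtain ⟨ε, εpos, hball⟩ : ∃ ε > 0, ball (0 : EuclideanSpace ℝ (Fin n)) ε ⊆ Eᶜ :=
    Metric.mem_nhds_iff.1 (hEclosed.isOpen_compl.mem_nhds hE0)
  set ε' : ℝ := min ε 1 / 2 with hε'def
  have hε'pos : 0 < ε' := by positivity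
  have hε'le1 : ε' ≤ 1 := by
    have : min ε 1 ≤ 1 := min_le_right _ _
    simp only [hε'def]; linarith
  have hε'ltε : ε' < ε := by
    have : min ε 1 ≤ ε := min_le_left _ _
    simp only [hε'def]; linarith
  have hnotE : ∀ x : EuclideanSpace ℝ (Fin n), ‖x‖ ≤ ε' → x ∉ E := by
    intro x hx
    exact hball (mem_ball_zero_iff.2 (lt_of_le_of_lt hx hε'ltε))
  -- scaling properties of the cone
  have hsmulC : ∀ t : ℝ, 0 < t → t • C = C := by
    intro t ht
    apply Set.Subset.antisymm
    · rintro _ ⟨x, hx, rfl⟩; exact hCcone t ht.le x hx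
    · intro x hx
      exact ⟨t⁻¹ • x, hCcone t⁻¹ (by positivity) x hx,
        by show t • t⁻¹ • x = x; rw [smul_smul, mul_inv_cancel₀ ht.ne', one_smul]⟩
  have hCB : ∀ R : ℝ, 0 < R →
      C ∩ closedBall (0 : EuclideanSpace ℝ (Fin n)) R = R • (C ∩ closedBall 0 1) := by
    intro R hR
    ext x
    constructor
    · rintro ⟨hxC, hx1⟩
      refine ⟨R⁻¹ • x, ⟨hCcone _ (by positivity) x hxC, ?_⟩,
        by show R • R⁻¹ • x = x; rw [smul_smul, mul_inv_cancel₀ hR.ne', one_smul]⟩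
      rw [mem_closedBall_zero_iff] at hx1 ⊢
      rw [norm_smul, norm_inv, Real.norm_eq_abs, abs_of_pos hR]
      rw [inv_mul_le_iff₀ hR, mul_one]; exact hx1
    · rintro ⟨y, ⟨hyC, hy1⟩, rfl⟩
      refine ⟨hCcone R hR.le y hyC, ?_⟩
      rw [mem_closedBall_zero_iff] at hy1 ⊢
      rw [norm_smul, Real.norm_eq_abs, abs_of_pos hR]
      calc R * ‖y‖ ≤ R * 1 := by nlinarith
        _ = R := mul_one R
  set v1 : ℝ≥0∞ := volume (C ∩ closedBall (0 : EuclideanSpace ℝ (Fin n)) 1) with hv1def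
  have hvol : ∀ R : ℝ, 0 < R →
      volume (C ∩ closedBall (0 : EuclideanSpace ℝ (Fin n)) R)
        = ENNReal.ofReal (R ^ n) * v1 := by
    intro R hR
    rw [hCB R hR, Measure.addHaar_smul_of_nonneg volume hR.le, finrank_euclideanSpace_fin]
  -- a nonzero interior point
  obtain ⟨x0, hx0, hx0ne⟩ : ∃ x, x ∈ interior C ∧ x ≠ (0 : EuclideanSpace ℝ (Fin n)) := by
    obtain ⟨z, hz⟩ := hCint
    by_cases hz0 : z = 0
    · subst hz0
      obtain ⟨r, rpos, hr⟩ := Metric.isOpen_iff.1 isOpen_interior 0 hz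
      refine ⟨(r/2) • EuclideanSpace.single (⟨0, by omega⟩ : Fin n) (1:ℝ), hr ?_, ?_⟩
      · rw [mem_ball_zero_iff, norm_smul, EuclideanSpace.norm_single, norm_one, mul_one,
          Real.norm_eq_abs, abs_of_pos (by linarith : (0:ℝ) < r/2)]
        linarith
      · intro h
        have h1 : ‖(r/2) • EuclideanSpace.single (⟨0, by omega⟩ : Fin n) (1:ℝ)‖ = r/2 := by
          rw [norm_smul, EuclideanSpace.norm_single, norm_one, mul_one,
            Real.norm_eq_abs, abs_of_pos (by linarith : (0:ℝ) < r/2)]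
        rw [h, norm_zero] at h1; linarith
    · exact ⟨z, hz, hz0⟩
  have hintcone : ∀ t : ℝ, 0 < t → ∀ x ∈ interior C, t • x ∈ interior C := by
    intro t ht x hx
    have h1 : t • x ∈ t • interior C := smul_mem_smul_set hx
    rwa [← interior_smul₀ ht.ne' C, hsmulC t ht] at h1
  have hx0n : 0 < ‖x0‖ := norm_pos_iff.2 hx0ne
  set y : EuclideanSpace ℝ (Fin n) := ‖x0‖⁻¹ • x0 with hydef
  have hy : y ∈ interior C := hintcone _ (by positivity) x0 hx0
  have hyn : ‖y‖ = 1 := by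
    rw [hydef, norm_smul, norm_inv, norm_norm, inv_mul_cancel₀ hx0n.ne']
  -- v1 is positive (and finite)
  have hv1pos : v1 ≠ 0 := by
    set y' : EuclideanSpace ℝ (Fin n) := (1/2 : ℝ) • y with hy'def
    have hy' : y' ∈ interior C := hintcone _ (by norm_num) y hy
    have hy'n : ‖y'‖ = 1/2 := by
      rw [hy'def, norm_smul, hyn, Real.norm_eq_abs]; norm_num
    obtain ⟨δ, δpos, hδ⟩ := Metric.isOpen_iff.1 isOpen_interior y' hy'
    set δ' : ℝ := min δ (1/2) with hδ'def
    have hδ'pos : 0 < δ' := lt_min δpos (by norm_num)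
    have hsub : ball y' δ' ⊆ C ∩ closedBall (0 : EuclideanSpace ℝ (Fin n)) 1 := by
      intro z hz
      rw [mem_ball] at hz
      constructor
      · exact interior_subset (hδ (mem_ball.2 (lt_of_lt_of_le hz (min_le_left _ _))))
      · rw [mem_closedBall_zero_iff]
        have h1 : ‖z - y'‖ < 1/2 := lt_of_lt_of_le (by rwa [← dist_eq_norm]) (min_le_right _ _)
        calc ‖z‖ = ‖z - y' + y'‖ := by rw [sub_add_cancel]
          _ ≤ ‖z - y'‖ + ‖y'‖ := norm_add_le _ _
          _ ≤ 1 := by rw [hy'n]; linarith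
    have := measure_mono (μ := volume) hsub
    have hb := measure_ball_pos volume y' hδ'pos
    intro h0
    rw [hv1def] at h0
    rw [h0] at this
    exact absurd (le_antisymm this zero_le) hb.ne'
  have hv1fin : v1 ≠ ⊤ :=
    ne_top_of_le_ne_top (measure_closedBall_lt_top).ne (measure_mono inter_subset_right)
  -- minimum of Θ on the compact set C ∩ sphere
  have hScomp : IsCompact (C ∩ sphere (0 : EuclideanSpace ℝ (Fin n)) 1) :=
    (isCompact_sphere 0 1).inter_left hCclosed
  have hSsub : C ∩ sphere (0 : EuclideanSpace ℝ (Fin n)) 1 ⊆ C \ {0} := by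
    rintro x ⟨hxC, hxS⟩
    refine ⟨hxC, ?_⟩
    simp only [mem_singleton_iff]
    intro h
    rw [mem_sphere_zero_iff_norm] at hxS
    rw [h, norm_zero] at hxS; norm_num at hxS
  have hSne : (C ∩ sphere (0 : EuclideanSpace ℝ (Fin n)) 1).Nonempty :=
    ⟨y, interior_subset hy, by rwa [mem_sphere_zero_iff_norm]⟩
  obtain ⟨u0, hu0, hmin⟩ := hScomp.exists_isMinOn hSne (hΘcont.mono hSsub)
  set m : ℝ := Θ u0 with hmdef
  have hm : 0 < m := hΘpos u0 (hSsub hu0)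
  -- pointwise lower bound from homogeneity
  have key : ∀ x ∈ C, ∀ R : ℝ, 0 < ‖x‖ → ‖x‖ ≤ R → m * R ^ (-q) ≤ Θ x := by
    intro x hxC R hx hxR
    set u : EuclideanSpace ℝ (Fin n) := ‖x‖⁻¹ • x with hudef
    have huC : u ∈ C := hCcone _ (by positivity) x hxC
    have hu1 : ‖u‖ = 1 := by
      rw [hudef, norm_smul, norm_inv, norm_norm, inv_mul_cancel₀ hx.ne']
    have huS : u ∈ C ∩ sphere (0 : EuclideanSpace ℝ (Fin n)) 1 :=
      ⟨huC, by rwa [mem_sphere_zero_iff_norm]⟩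
    have hxu : x = ‖x‖ • u := by
      rw [hudef, smul_smul, mul_inv_cancel₀ hx.ne', one_smul]
    have hΘx : Θ x = ‖x‖ ^ (-q) * Θ u := by
      conv_lhs => rw [hxu]
      exact hΘhom ‖x‖ hx u (hSsub huS)
    have h1 : m ≤ Θ u := hmin huS
    have h2 : R ^ (-q) ≤ ‖x‖ ^ (-q) :=
      rpow_anti_aux hx hxR (neg_nonpos.2 hq0)
    have h3 : 0 < ‖x‖ ^ (-q) := Real.rpow_pos_of_pos hx _
    calc m * R ^ (-q) ≤ m * ‖x‖ ^ (-q) := by nlinarith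
      _ ≤ Θ u * ‖x‖ ^ (-q) := by nlinarith
      _ = Θ x := by rw [hΘx]; ring
  -- dyadic annuli
  set R : ℕ → ℝ := fun k => ε' * (1/2 : ℝ) ^ k with hRdef
  have hRpos : ∀ k, 0 < R k := fun k => by positivity
  have hRle : ∀ k, R k ≤ ε' := by
    intro k
    have : (1/2 : ℝ) ^ k ≤ 1 := pow_le_one₀ (by norm_num) (by norm_num)
    calc R k = ε' * (1/2 : ℝ) ^ k := rfl
      _ ≤ ε' * 1 := by nlinarith
      _ = ε' := mul_one _
  have hRanti : ∀ j k : ℕ, j ≤ k → R k ≤ R j := by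
    intro j k hjk
    have : (1/2 : ℝ) ^ k ≤ (1/2 : ℝ) ^ j :=
      pow_le_pow_of_le_one (by norm_num) (by norm_num) hjk
    simp only [hRdef]; nlinarith
  set s : ℕ → Set (EuclideanSpace ℝ (Fin n)) := fun k =>
    C ∩ (closedBall 0 (R k) \ closedBall 0 (R (k+1))) with hsdef
  have hmeas : ∀ k, MeasurableSet (s k) := fun k =>
    hCclosed.measurableSet.inter (measurableSet_closedBall.diff measurableSet_closedBall)
  have hmem : ∀ k x, x ∈ s k ↔ x ∈ C ∧ R (k+1) < ‖x‖ ∧ ‖x‖ ≤ R k := by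
    intro k x
    simp only [hsdef, mem_inter_iff, mem_diff, mem_closedBall_zero_iff, not_le]
    tauto
  have hdisj : Pairwise (Function.onFun Disjoint s) := by
    have hlt : ∀ j k : ℕ, j < k → Disjoint (s j) (s k) := by
      intro j k hjk
      rw [Set.disjoint_left]
      intro x hxj hxk
      rw [hmem] at hxj hxk
      have := hRanti (j+1) k hjk
      linarith [hxj.2.1, hxk.2.2]
    intro j k hjk
    rcases hjk.lt_or_gt with h | h
    · exact hlt j k h
    · exact (hlt k j h).symm
  have hUsub : (⋃ k, s k) ⊆ (C \ E) ∩ closedBall (0 : EuclideanSpace ℝ (Fin n)) 1 := by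
    intro x hx
    obtain ⟨k, hk⟩ := mem_iUnion.1 hx
    rw [hmem] at hk
    have hxn : ‖x‖ ≤ ε' := le_trans hk.2.2 (hRle k)
    exact ⟨⟨hk.1, hnotE x hxn⟩, mem_closedBall_zero_iff.2 (le_trans hxn hε'le1)⟩
  -- volume of each annulus
  have hskvol : ∀ k, volume (s k) = ENNReal.ofReal (R k ^ n - R (k+1) ^ n) * v1 := by
    intro k
    have hset : s k = (C ∩ closedBall 0 (R k)) \ (C ∩ closedBall 0 (R (k+1))) := by
      rw [hsdef]
      ext x
      simp only [mem_inter_iff, mem_diff]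
      tauto
    have hsub : C ∩ closedBall (0 : EuclideanSpace ℝ (Fin n)) (R (k+1))
        ⊆ C ∩ closedBall 0 (R k) :=
      fun x hx => ⟨hx.1, closedBall_subset_closedBall (hRanti k (k+1) (by omega)) hx.2⟩
    have hfin : volume (C ∩ closedBall (0 : EuclideanSpace ℝ (Fin n)) (R (k+1))) ≠ ⊤ :=
      ne_top_of_le_ne_top (measure_closedBall_lt_top).ne (measure_mono inter_subset_right)
    have hns : NullMeasurableSet (C ∩ closedBall (0 : EuclideanSpace ℝ (Fin n)) (R (k+1)))
        volume :=
      (hCclosed.measurableSet.inter measurableSet_closedBall).nullMeasurableSet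
    rw [hset, measure_diff hsub hns hfin, hvol _ (hRpos k), hvol _ (hRpos (k+1))]
    have hle : R (k+1) ^ n ≤ R k ^ n :=
      pow_le_pow_left₀ (hRpos (k+1)).le (hRanti k (k+1) (by omega)) n
    rw [ENNReal.ofReal_sub _ (by positivity), ENNReal.sub_mul (fun _ _ => hv1fin)]
  -- uniform positive lower bound per annulus
  set c : ℝ≥0∞ := ENNReal.ofReal (m * (ε' ^ ((n : ℝ) - q) * (1 - (1/2 : ℝ) ^ n))) * v1
    with hcdef
  have hhalf : (1/2 : ℝ) ^ n < 1 := pow_lt_one₀ (by norm_num) (by norm_num) (by omega)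
  have hcne : c ≠ 0 := by
    have h1 : 0 < m * (ε' ^ ((n : ℝ) - q) * (1 - (1/2 : ℝ) ^ n)) := by
      have h2 := Real.rpow_pos_of_pos hε'pos ((n : ℝ) - q)
      exact mul_pos hm (mul_pos h2 (by linarith))
    rw [hcdef]
    exact mul_ne_zero (by simpa using h1) hv1pos
  have hterm : ∀ k, c ≤ ∫⁻ x in s k, ENNReal.ofReal (Θ x) ∂volume := by
    intro k
    have hbound : ENNReal.ofReal (m * R k ^ (-q)) * volume (s k)
        ≤ ∫⁻ x in s k, ENNReal.ofReal (Θ x) ∂volume := by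
      rw [← setLIntegral_const (s k) (ENNReal.ofReal (m * R k ^ (-q)))]
      apply setLIntegral_mono' (hmeas k)
      intro x hx
      rw [hmem] at hx
      exact ENNReal.ofReal_le_ofReal
        (key x hx.1 (R k) (lt_trans (hRpos (k+1)) hx.2.1) hx.2.2)
    refine le_trans ?_ hbound
    rw [hskvol k]
    have heq : ENNReal.ofReal (m * R k ^ (-q)) * (ENNReal.ofReal (R k ^ n - R (k+1) ^ n) * v1)
        = ENNReal.ofReal ((m * R k ^ (-q)) * (R k ^ n - R (k+1) ^ n)) * v1 := by
      rw [ENNReal.ofReal_mul (show (0:ℝ) ≤ m * R k ^ (-q) by positivity), mul_assoc]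
    rw [heq, hcdef]
    apply mul_le_mul_left (ENNReal.ofReal_le_ofReal ?_)
    -- real inequality
    have hRkpos := hRpos k
    have hRk1 : R (k+1) = R k * (1/2 : ℝ) := by
      simp only [hRdef]; rw [pow_succ, mul_assoc]
    have hsplit : R k ^ n - R (k+1) ^ n = R k ^ n * (1 - (1/2 : ℝ) ^ n) := by
      rw [hRk1, mul_pow (R k) (1/2 : ℝ) n, mul_one_sub (R k ^ n) ((1/2 : ℝ) ^ n)]
    have hpow : R k ^ n = R k ^ ((n : ℝ)) := (Real.rpow_natCast _ n).symm
    have hcomb : R k ^ (-q) * R k ^ ((n : ℝ)) = R k ^ ((n : ℝ) - q) := by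
      rw [← Real.rpow_add hRkpos, neg_add_eq_sub]
    have hmono : ε' ^ ((n : ℝ) - q) ≤ R k ^ ((n : ℝ) - q) :=
      rpow_anti_aux hRkpos (hRle k) (by linarith)
    calc m * (ε' ^ ((n : ℝ) - q) * (1 - (1/2 : ℝ) ^ n))
        ≤ m * (R k ^ ((n : ℝ) - q) * (1 - (1/2 : ℝ) ^ n)) :=
          mul_le_mul_of_nonneg_left
            (mul_le_mul_of_nonneg_right hmono (by linarith)) hm.le
      _ = m * R k ^ (-q) * (R k ^ n - R (k+1) ^ n) := by
          rw [hsplit, hpow, ← hcomb, mul_assoc, ← mul_assoc]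
  -- conclusion
  have main : ∫⁻ x in (C \ E) ∩ closedBall (0 : EuclideanSpace ℝ (Fin n)) 1,
      ENNReal.ofReal (Θ x) ∂volume = ⊤ := by
    refine top_unique ?_
    calc (⊤ : ℝ≥0∞) = ∑' _ : ℕ, c := (ENNReal.tsum_const_eq_top_of_ne_zero hcne).symm
      _ ≤ ∑' k, ∫⁻ x in s k, ENNReal.ofReal (Θ x) ∂volume := ENNReal.tsum_le_tsum hterm
      _ = ∫⁻ x in ⋃ k, s k, ENNReal.ofReal (Θ x) ∂volume :=
          (lintegral_iUnion hmeas hdisj _).symm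
      _ ≤ _ := lintegral_mono_set hUsub
  refine ⟨main, top_unique ?_⟩
  calc (⊤ : ℝ≥0∞) = _ := main.symm
    _ ≤ _ := lintegral_mono_set inter_subset_left
end
end

section
/- Let C be a pointed closed convex cone in ℝⁿ with nonempty interior, let q > n, let Θ : C ∖ {0} → (0, ∞) be a continuous function homogeneous of degree −q, let 𝔸 be a C-asymptotic set, and let z ∈ C with z ≠ 0. Then ∫_{z+C} Θ dH^n and ∫_{z+𝔸} Θ dH^n are finite and the convolution formula holds: T_Θ(𝔸, z) = ∫_{(z+C) ∖ (z+𝔸)} Θ(x) dH^n(x) = ∫_{z+C} Θ(x) dH^n(x) − ∫_{z+𝔸} Θ(x) dH^n(x), where ∫_{z+C} Θ dH^n equals the convolution (𝟙_{−C} ∗ Θ)(z) = ∫_{ℝⁿ} 𝟙_{−C}(z − x) Θ(x) dH^n(x). -/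
open Set MeasureTheory Metric Bornology
open scoped InnerProductSpace ENNReal NNReal Pointwise

noncomputable section

theorem stmt14 {n : ℕ} (hn : 2 ≤ n) (C A : Set (EuclideanSpace ℝ (Fin n)))
    (hC : IsPointedClosedConvexCone C) (hA : IsCAsymptotic C A)
    (q : ℝ) (hq : (n : ℝ) < q) (Θ : EuclideanSpace ℝ (Fin n) → ℝ)
    (hΘpos : ∀ x ∈ C \ {0}, 0 < Θ x)
    (hΘcont : ContinuousOn Θ (C \ {0}))
    (hΘhom : ∀ l : ℝ, 0 < l → ∀ x ∈ C \ {0}, Θ (l • x) = l ^ (-q) * Θ x)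
    (hΘzero : ∀ x, x ∉ C \ {0} → Θ x = 0)
    (z : EuclideanSpace ℝ (Fin n)) (hz : z ∈ C) (hz0 : z ≠ 0) :
    (∫⁻ x in (fun x => z + x) '' C, ENNReal.ofReal (Θ x) ∂volume < ⊤) ∧
    (∫⁻ x in (fun x => z + x) '' A, ENNReal.ofReal (Θ x) ∂volume < ⊤) ∧
    (∫⁻ x in ((fun x => z + x) '' C) \ ((fun x => z + x) '' A), ENNReal.ofReal (Θ x) ∂volume
      = (∫⁻ x in (fun x => z + x) '' C, ENNReal.ofReal (Θ x) ∂volume)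
        - ∫⁻ x in (fun x => z + x) '' A, ENNReal.ofReal (Θ x) ∂volume) ∧
    (∫⁻ x in (fun x => z + x) '' C, ENNReal.ofReal (Θ x) ∂volume
      = ∫⁻ x, ENNReal.ofReal ((-C).indicator (fun _ => (1 : ℝ)) (z - x) * Θ x) ∂volume) := by
  
  obtain ⟨hCcl, hCconv, hCint, hCsmul, hCpt⟩ := hC
  -- image as preimage
  have himg : ∀ S : Set (EuclideanSpace ℝ (Fin n)),
      (fun x => z + x) '' S = (fun x => x - z) ⁻¹' S := by
    intro S; ext x
    constructor
    · rintro ⟨y, hy, rfl⟩; simpa [Set.mem_preimage, add_sub_cancel_left] using hy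
    · intro h; exact ⟨x - z, h, by module⟩
  have hScl : IsClosed ((fun x => z + x) '' C) := by
    rw [himg]; exact hCcl.preimage (continuous_id.sub continuous_const)
  have hTcl : IsClosed ((fun x => z + x) '' A) := by
    rw [himg]; exact hA.2.2.1.preimage (continuous_id.sub continuous_const)
  have hTS : (fun x => z + x) '' A ⊆ (fun x => z + x) '' C := Set.image_mono hA.1
  -- sums stay in C
  have hadd : ∀ a ∈ C, ∀ b ∈ C, a + b ∈ C := by
    intro a ha b hb
    have h1 : (1/2 : ℝ) • a + (1/2 : ℝ) • b ∈ C :=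
      hCconv ha hb (by norm_num) (by norm_num) (by norm_num)
    have h2 := hCsmul 2 (by norm_num) _ h1
    have : (2:ℝ) • ((1/2 : ℝ) • a + (1/2 : ℝ) • b) = a + b := by
      rw [smul_add, smul_smul, smul_smul]; norm_num
    rwa [this] at h2
  have hmemC : ∀ x ∈ (fun x => z + x) '' C, x ∈ C \ {0} := by
    rintro x ⟨y, hy, rfl⟩
    refine ⟨hadd z hz y hy, ?_⟩
    simp only [Set.mem_singleton_iff]
    intro h0
    have hyz : y = -z := by linear_combination (norm := module) h0
    have : z ∈ C ∩ (-C) := ⟨hz, by simpa [Set.mem_neg, hyz] using hy⟩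
    rw [hCpt] at this
    exact hz0 this
  have h0C : (0 : EuclideanSpace ℝ (Fin n)) ∈ C := by
    obtain ⟨w, hw⟩ := hCint
    have := hCsmul 0 le_rfl w (interior_subset hw)
    simpa using this
  -- distance bound: points of z + C have norm ≥ δ > 0
  have hSne : ((fun x => z + x) '' C).Nonempty := ⟨z + 0, ⟨0, h0C, rfl⟩⟩
  have h0S : (0 : EuclideanSpace ℝ (Fin n)) ∉ (fun x => z + x) '' C := by
    intro h; exact (hmemC 0 h).2 rfl
  set δ : ℝ := infDist 0 ((fun x => z + x) '' C) with hδdef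
  have hδpos : 0 < δ :=
    (hScl.notMem_iff_infDist_pos hSne).mp h0S
  have hδle : ∀ x ∈ (fun x => z + x) '' C, δ ≤ ‖x‖ := by
    intro x hx
    have h := infDist_le_dist_of_mem (x := (0 : EuclideanSpace ℝ (Fin n))) hx
    rwa [dist_zero_left] at h
  -- sup of Θ on the unit sphere part of C
  have hKcomp : IsCompact (C ∩ sphere (0 : EuclideanSpace ℝ (Fin n)) 1) :=
    (isCompact_sphere _ _).inter_left hCcl
  have hKsub : C ∩ sphere (0 : EuclideanSpace ℝ (Fin n)) 1 ⊆ C \ {0} := by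
    rintro u ⟨hu1, hu2⟩
    refine ⟨hu1, ?_⟩
    simp only [mem_sphere_iff_norm, sub_zero] at hu2
    simp only [Set.mem_singleton_iff]
    intro h; rw [h] at hu2; simp at hu2
  have hKne : (C ∩ sphere (0 : EuclideanSpace ℝ (Fin n)) 1).Nonempty := by
    refine ⟨‖z‖⁻¹ • z, hCsmul _ (by positivity) z hz, ?_⟩
    simp [norm_smul, norm_ne_zero_iff.mpr hz0, abs_of_nonneg, inv_nonneg.mpr (norm_nonneg z),
      inv_mul_cancel₀ (norm_ne_zero_iff.mpr hz0)]
  obtain ⟨u₀, hu₀, hmax⟩ := hKcomp.exists_isMaxOn hKne (hΘcont.mono hKsub)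
  set M : ℝ := Θ u₀ with hM
  have hMpos : 0 < M := hΘpos u₀ (hKsub hu₀)
  -- pointwise bound on C \ {0}
  have hbound : ∀ x ∈ C \ {0}, Θ x ≤ M * ‖x‖ ^ (-q) := by
    rintro x ⟨hx1, hx2⟩
    have hxn : (0:ℝ) < ‖x‖ := norm_pos_iff.mpr (by simpa using hx2)
    set u : EuclideanSpace ℝ (Fin n) := ‖x‖⁻¹ • x with hu
    have huC : u ∈ C := hCsmul _ (by positivity) x hx1
    have hun : ‖u‖ = 1 := by
      rw [hu, norm_smul, Real.norm_eq_abs, abs_of_nonneg (by positivity),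
        inv_mul_cancel₀ hxn.ne']
    have huK : u ∈ C ∩ sphere (0 : EuclideanSpace ℝ (Fin n)) 1 :=
      ⟨huC, by simp [mem_sphere_iff_norm, hun]⟩
    have hxu : x = ‖x‖ • u := by rw [hu, smul_smul, mul_inv_cancel₀ hxn.ne', one_smul]
    calc Θ x = Θ (‖x‖ • u) := by rw [← hxu]
      _ = ‖x‖ ^ (-q) * Θ u := hΘhom ‖x‖ hxn u (hKsub huK)
      _ ≤ ‖x‖ ^ (-q) * M := by
            have := hmax huK
            exact mul_le_mul_of_nonneg_left this (by positivity)
      _ = M * ‖x‖ ^ (-q) := mul_comm _ _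
  -- combined bound on z + C
  set c : ℝ := 1 + δ⁻¹ with hc
  have hcpos : 0 < c := by positivity
  have hbound2 : ∀ x ∈ (fun x => z + x) '' C,
      Θ x ≤ (M * c ^ q) * (1 + ‖x‖) ^ (-q) := by
    intro x hx
    have hx' := hmemC x hx
    have hxδ := hδle x hx
    have hxn : (0:ℝ) < ‖x‖ := lt_of_lt_of_le hδpos hxδ
    have h1 : 1 + ‖x‖ ≤ c * ‖x‖ := by
      rw [hc, add_mul, one_mul]
      have : (1:ℝ) ≤ δ⁻¹ * ‖x‖ := by
        rw [inv_mul_eq_div, le_div_iff₀ hδpos, one_mul]; exact hxδ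
      linarith
    have h2 : (c * ‖x‖) ^ (-q) ≤ (1 + ‖x‖) ^ (-q) :=
      Real.rpow_le_rpow_of_nonpos (by positivity) h1 (neg_nonpos.mpr (le_of_lt (lt_of_le_of_lt (Nat.cast_nonneg n) hq)))
    have h3 : (c * ‖x‖) ^ (-q) = c ^ (-q) * ‖x‖ ^ (-q) :=
      Real.mul_rpow hcpos.le hxn.le
    have h4 : ‖x‖ ^ (-q) ≤ c ^ q * (1 + ‖x‖) ^ (-q) := by
      have := mul_le_mul_of_nonneg_left h2 (by positivity : (0:ℝ) ≤ c ^ q)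
      rw [h3, ← mul_assoc, ← Real.rpow_add hcpos] at this
      simpa using this
    calc Θ x ≤ M * ‖x‖ ^ (-q) := hbound x hx'
      _ ≤ M * (c ^ q * (1 + ‖x‖) ^ (-q)) := mul_le_mul_of_nonneg_left h4 hMpos.le
      _ = (M * c ^ q) * (1 + ‖x‖) ^ (-q) := by ring
  -- finiteness over z + C
  have hfinC : ∫⁻ x in (fun x => z + x) '' C, ENNReal.ofReal (Θ x) ∂volume < ⊤ := by
    calc ∫⁻ x in (fun x => z + x) '' C, ENNReal.ofReal (Θ x) ∂volume
        ≤ ∫⁻ x in (fun x => z + x) '' C,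
            ENNReal.ofReal ((M * c ^ q) * (1 + ‖x‖) ^ (-q)) ∂volume :=
          setLIntegral_mono' hScl.measurableSet
            (fun x hx => ENNReal.ofReal_le_ofReal (hbound2 x hx))
      _ ≤ ∫⁻ x, ENNReal.ofReal ((M * c ^ q) * (1 + ‖x‖) ^ (-q)) ∂volume :=
          setLIntegral_le_lintegral _ _
      _ = ∫⁻ x, ENNReal.ofReal (M * c ^ q) * ENNReal.ofReal ((1 + ‖x‖) ^ (-q)) ∂volume := by
          congr 1; ext x
          rw [ENNReal.ofReal_mul (by positivity)]
      _ = ENNReal.ofReal (M * c ^ q) * ∫⁻ x, ENNReal.ofReal ((1 + ‖x‖) ^ (-q)) ∂volume :=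
          lintegral_const_mul' _ _ ENNReal.ofReal_ne_top
      _ < ⊤ := by
          apply ENNReal.mul_lt_top ENNReal.ofReal_lt_top
          apply finite_integral_one_add_norm
          simpa using hq
  have hfinA : ∫⁻ x in (fun x => z + x) '' A, ENNReal.ofReal (Θ x) ∂volume < ⊤ :=
    lt_of_le_of_lt (lintegral_mono_set hTS) hfinC
  refine ⟨hfinC, hfinA, ?_, ?_⟩
  · -- subtraction formula
    have hsplit : ∫⁻ x in (fun x => z + x) '' C, ENNReal.ofReal (Θ x) ∂volume
        = (∫⁻ x in ((fun x => z + x) '' C) \ ((fun x => z + x) '' A),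
            ENNReal.ofReal (Θ x) ∂volume)
          + ∫⁻ x in (fun x => z + x) '' A, ENNReal.ofReal (Θ x) ∂volume := by
      rw [← lintegral_union hTcl.measurableSet disjoint_sdiff_left,
        Set.diff_union_of_subset hTS]
    rw [hsplit, ENNReal.add_sub_cancel_right hfinA.ne]
  · -- convolution formula
    have hpt : ∀ x, ENNReal.ofReal ((-C).indicator (fun _ => (1 : ℝ)) (z - x) * Θ x)
        = Set.indicator ((fun x => z + x) '' C) (fun x => ENNReal.ofReal (Θ x)) x := by
      intro x
      by_cases hx : x ∈ (fun x => z + x) '' C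
      · have hx' : z - x ∈ -C := by
          rw [himg] at hx
          simpa [Set.mem_neg, neg_sub] using hx
        rw [Set.indicator_of_mem hx', Set.indicator_of_mem hx, one_mul]
      · have hx' : z - x ∉ -C := by
          rw [himg] at hx
          intro h
          exact hx (by simpa [Set.mem_neg, neg_sub] using h)
        rw [Set.indicator_of_notMem hx', Set.indicator_of_notMem hx, zero_mul,
          ENNReal.ofReal_zero]
    rw [funext hpt, lintegral_indicator hScl.measurableSet]
end
end
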